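/- arXiv:1406.1300 — 9 statements merged into one kernel-verified Lean document; each statement's English description precedes it below -/
import Mathlib

section
/- Let G be a simple graph on a finite vertex set V with |V| = n and let σ be an orientation of G. Write the characteristic polynomial of R_s(G^σ) as c_0·λ^n + c_1·λ^{n−1} + … + c_n, i.e. c_i is the coefficient of λ^{n−i}. Then c_i = 0 for every odd index i with 1 ≤ i ≤ n. -/
open Matrix Polynomial

/-- `σ` is an orientation of the simple graph `G`. -/
def IsOrientation {V : Type*} [Fintype V] (G : SimpleGraph V) [DecidableRel G.Adj]
    (σ : V → V → ℝ) : Prop :=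
  (∀ v w, σ v w + σ w v = 0) ∧
  (∀ v w, G.Adj v w → σ v w = 1 ∨ σ v w = -1) ∧
  (∀ v w, ¬ G.Adj v w → σ v w = 0)

/-- The skew Randić matrix of the oriented graph `G^σ`. -/
noncomputable def skewRandicMatrix {V : Type*} [Fintype V] (G : SimpleGraph V)
    [DecidableRel G.Adj] (σ : V → V → ℝ) : Matrix V V ℝ :=
  fun v w => σ v w / Real.sqrt ((G.degree v : ℝ) * (G.degree w : ℝ))

/-- The Randić matrix of `G`. -/
noncomputable def randicMatrix {V : Type*} [Fintype V] (G : SimpleGraph V)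
    [DecidableRel G.Adj] : Matrix V V ℝ :=
  fun v w => if G.Adj v w then 1 / Real.sqrt ((G.degree v : ℝ) * (G.degree w : ℝ)) else 0

/-- The spectrum of a real matrix: the multiset of roots, with multiplicity, of its
characteristic polynomial regarded as a matrix over `ℂ`. -/
noncomputable def spec {V : Type*} [Fintype V] [DecidableEq V] (M : Matrix V V ℝ) :
    Multiset ℂ :=
  (M.map (fun x : ℝ => (x : ℂ))).charpoly.roots

/-- The energy of a real matrix: the sum of the absolute values of its spectrum. -/
noncomputable def energy {V : Type*} [Fintype V] [DecidableEq V] (M : Matrix V V ℝ) : ℝ :=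
  ((spec M).map (fun z => ‖z‖)).sum

/-- The general Randić index `R_{-1}(G)`: the sum over all edges `{v,w}` of
`1/(d(v)·d(w))`. -/
noncomputable def randicIndexNegOne {V : Type*} [Fintype V] [DecidableEq V]
    (G : SimpleGraph V) [DecidableRel G.Adj] : ℝ :=
  ∑ e ∈ G.edgeFinset,
    Sym2.lift ⟨fun v w => 1 / ((G.degree v : ℝ) * (G.degree w : ℝ)),
      fun v w => by simp [mul_comm]⟩ e

set_option maxRecDepth 4000

lemma coeff_comp_neg_X {R : Type*} [CommRing R] (p : R[X]) (k : ℕ) :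
    (p.comp (-X)).coeff k = (-1)^k * p.coeff k := by
  induction p using Polynomial.induction_on' with
  | add p q hp hq => simp [add_comp, hp, hq, mul_add]
  | monomial n a =>
      simp only [monomial_comp, coeff_monomial]
      rw [show (-X : R[X]) = C (-1) * X by simp, mul_pow, ← C_pow, ← mul_assoc, ← C_mul,
        coeff_C_mul, coeff_X_pow]
      by_cases h : n = k
      · simp [h, mul_comm]
      · simp only [if_neg h, mul_zero, if_neg (fun hk : k = n => h hk.symm)]

lemma charpoly_transpose {n R : Type*} [Fintype n] [DecidableEq n] [CommRing R]
    (M : Matrix n n R) : Mᵀ.charpoly = M.charpoly := by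
  have : charmatrix (Mᵀ) = (charmatrix M)ᵀ := by
    apply Matrix.ext; intro i j
    by_cases h : i = j
    · subst h; simp [charmatrix_apply_eq]
    · rw [transpose_apply, charmatrix_apply_ne _ _ _ h, charmatrix_apply_ne _ _ _ (Ne.symm h)]
      rfl
  rw [Matrix.charpoly, this, det_transpose, Matrix.charpoly]

lemma charpoly_neg {n R : Type*} [Fintype n] [DecidableEq n] [CommRing R]
    (M : Matrix n n R) :
    M.charpoly.comp (-X) = (-1)^(Fintype.card n) * (-M).charpoly := by
  have h : (charmatrix M).map (eval₂RingHom C (-X) : R[X] →+* R[X]) = -(charmatrix (-M)) := by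
    apply Matrix.ext; intro i j
    by_cases h : i = j
    · subst h
      simp only [Matrix.map_apply, neg_apply, charmatrix_apply_eq]
      simp [eval₂_sub]
      ring
    · rw [Matrix.map_apply, charmatrix_apply_ne _ _ _ h, neg_apply, charmatrix_apply_ne _ _ _ h]
      simp
  calc M.charpoly.comp (-X) = (eval₂RingHom C (-X)) (charmatrix M).det := rfl
    _ = ((charmatrix M).map (eval₂RingHom C (-X))).det := by rw [RingHom.map_det]; rfl
    _ = (-(charmatrix (-M))).det := by rw [h]
    _ = (-1)^(Fintype.card n) * (-M).charpoly := by
        rw [det_neg]; simp [Matrix.charpoly]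


theorem skewRandic_charpoly_odd_coeff_zero
    {V : Type*} [Fintype V] [DecidableEq V] (G : SimpleGraph V) [DecidableRel G.Adj]
    (σ : V → V → ℝ) (hσ : IsOrientation G σ)
    (i : ℕ) (hodd : Odd i) (h1 : 1 ≤ i) (h2 : i ≤ Fintype.card V) :
    (skewRandicMatrix G σ).charpoly.coeff (Fintype.card V - i) = 0 := by
  set M := skewRandicMatrix G σ with hM
  have hskew : Mᵀ = -M := by
    apply Matrix.ext; intro v w
    simp only [hM, transpose_apply, Matrix.neg_apply, skewRandicMatrix]
    have h1 : σ w v = -σ v w := by linarith [hσ.1 v w]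
    rw [h1, mul_comm ((G.degree w : ℝ))]
    ring
  have hcp : (-M).charpoly = M.charpoly := by
    rw [← hskew, _root_.charpoly_transpose]
  have key := charpoly_neg M
  rw [hcp] at key
  have hcoeff := congrArg (fun p => p.coeff (Fintype.card V - i)) key
  simp only [coeff_comp_neg_X, Polynomial.coeff_smul] at hcoeff
  rw [show ((-1 : ℝ[X]) ^ Fintype.card V * M.charpoly) = C ((-1:ℝ)^Fintype.card V) * M.charpoly
      by simp, coeff_C_mul] at hcoeff
  set c := M.charpoly.coeff (Fintype.card V - i)
  have hpow : ((-1 : ℝ) ^ (Fintype.card V - i)) = -(-1 : ℝ) ^ Fintype.card V := by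
    have : (-1 : ℝ) ^ (Fintype.card V - i) * (-1 : ℝ) ^ i = (-1 : ℝ) ^ Fintype.card V := by
      rw [← pow_add, Nat.sub_add_cancel h2]
    rw [hodd.neg_one_pow] at this
    linarith
  rw [hpow] at hcoeff
  have hne : ((-1 : ℝ) ^ Fintype.card V) ≠ 0 := by positivity
  have : (-1 : ℝ) ^ Fintype.card V * (-c) = (-1 : ℝ) ^ Fintype.card V * c := by linarith
  have := mul_left_cancel₀ hne this
  linarith
end

section
/- Let G be a simple graph on a finite vertex set V with |V| = n ≥ 2 and let σ be an orientation of G. Then the coefficient of λ^{n−2} in the characteristic polynomial det(λ·I − R_s(G^σ)) equals R_{−1}(G), the general Randić index of G. -/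
open Matrix Polynomial

/-- The transposition associated to an unordered pair. -/
noncomputable def swapOf {V : Type*} [DecidableEq V] : Sym2 V → Equiv.Perm V :=
  Sym2.lift ⟨fun a b => Equiv.swap a b, fun a b => Equiv.swap_comm a b⟩

lemma swapOf_mk {V : Type*} [DecidableEq V] (a b : V) :
    swapOf s(a, b) = Equiv.swap a b := rfl

lemma sym2_eq_of_pair_finset_eq {V : Type*} [DecidableEq V] {a b c d : V}
    (hab : a ≠ b) (h : ({a, b} : Finset V) = {c, d}) : s(a, b) = s(c, d) := by
  have ha : a = c ∨ a = d := by
    have : a ∈ ({c, d} : Finset V) := h ▸ Finset.mem_insert_self a {b}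
    simpa using this
  have hb : b = c ∨ b = d := by
    have : b ∈ ({c, d} : Finset V) := h ▸ (by simp : b ∈ ({a, b} : Finset V))
    simpa using this
  rcases ha with rfl | rfl <;> rcases hb with rfl | rfl <;> simp_all [Sym2.eq_iff]

theorem skewRandic_charpoly_coeff_two
    {V : Type*} [Fintype V] [DecidableEq V] (G : SimpleGraph V) [DecidableRel G.Adj]
    (σ : V → V → ℝ) (hσ : IsOrientation G σ) (hn : 2 ≤ Fintype.card V) :
    (skewRandicMatrix G σ).charpoly.coeff (Fintype.card V - 2)
      = randicIndexNegOne G := by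
  classical
  obtain ⟨hskew, hadj, hnadj⟩ := hσ
  set M := skewRandicMatrix G σ with hMdef
  set N := Fintype.card V with hNdef
  -- basic facts about M
  have hMskew : ∀ v w, M w v = - M v w := by
    intro v w
    have h1 : σ w v = -σ v w := by have := hskew v w; linarith
    simp only [hMdef, skewRandicMatrix, h1, neg_div]
    rw [mul_comm ((G.degree w : ℝ))]
  have hMdiag : ∀ v, M v v = 0 := by
    intro v
    have h1 : σ v v = 0 := by have := hskew v v; linarith
    simp [hMdef, skewRandicMatrix, h1]
  have hM0 : ∀ v w, ¬ G.Adj v w → M v w = 0 := by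
    intro v w h
    simp [hMdef, skewRandicMatrix, hnadj v w h]
  have hMsq : ∀ v w, G.Adj v w →
      M v w * M v w = 1 / ((G.degree v : ℝ) * (G.degree w : ℝ)) := by
    intro v w h
    have hv : 0 < G.degree v := (G.degree_pos_iff_exists_adj v).mpr ⟨w, h⟩
    have hw : 0 < G.degree w := (G.degree_pos_iff_exists_adj w).mpr ⟨v, h.symm⟩
    have hd : (0 : ℝ) ≤ (G.degree v : ℝ) * (G.degree w : ℝ) := by positivity
    have hs : σ v w * σ v w = 1 := by rcases hadj v w h with h1 | h1 <;> simp [h1]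
    simp only [hMdef, skewRandicMatrix, div_mul_div_comm, hs,
      Real.mul_self_sqrt hd]
  -- counting fixed points
  have hcount : ∀ p : Equiv.Perm V,
      (Finset.univ.filter fun i => p i = i).card + p.support.card = N := by
    intro p
    have := Finset.card_filter_add_card_filter_not
      (s := (Finset.univ : Finset V)) (p := fun i => p i = i)
    simpa [Equiv.Perm.support, Finset.filter_not, hNdef, Finset.card_univ] using this
  -- expansion of the coefficient
  have expand : M.charpoly.coeff (N - 2)
      = ∑ p : Equiv.Perm V, ((Equiv.Perm.sign p : ℤ) : ℝ) *
          (if N - 2 = (Finset.univ.filter fun i => p i = i).card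
            then (∏ i ∈ p.support, (-(M (p i) i))) else 0) := by
    rw [Matrix.charpoly, Matrix.det_apply, Polynomial.finset_sum_coeff]
    refine Finset.sum_congr rfl fun p _ => ?_
    have hprod : (∏ i, (charmatrix M) (p i) i)
        = X ^ ((Finset.univ.filter fun i => p i = i).card)
          * C (∏ i ∈ p.support, (-(M (p i) i))) := by
      rw [← Finset.prod_filter_mul_prod_filter_not Finset.univ (fun i => p i = i)]
      congr 1
      · rw [Finset.prod_congr rfl (fun i hi => ?_), Finset.prod_const]
        have h1 : p i = i := (Finset.mem_filter.mp hi).2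
        rw [h1, charmatrix_apply_eq, hMdiag, map_zero, sub_zero]
      · rw [map_prod]
        refine Finset.prod_congr ?_ fun i hi => ?_
        · rfl
        · have h1 : p i ≠ i := by
            have := (Finset.mem_filter.mp hi).2
            simpa using this
          rw [charmatrix_apply_ne _ _ _ h1, map_neg]
    rw [Polynomial.coeff_smul, hprod, mul_comm (X ^ _), Polynomial.coeff_C_mul,
      Polynomial.coeff_X_pow]
    simp [Units.smul_def, zsmul_eq_mul, mul_comm]
  rw [expand]
  -- reduce to the image of the edge set under `swapOf`
  rw [← Finset.sum_subset (Finset.subset_univ (G.edgeFinset.image swapOf)) ?_]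
  · rw [Finset.sum_image ?_]
    · unfold randicIndexNegOne
      refine Finset.sum_congr rfl fun e he => ?_
      induction e with
      | _ a b =>
        have hadj' : G.Adj a b := by simpa [SimpleGraph.mem_edgeFinset] using he
        have hab : a ≠ b := hadj'.ne
        rw [swapOf_mk]
        have hsupp : (Equiv.swap a b).support = {a, b} := Equiv.Perm.support_swap hab
        have hk : (Equiv.swap a b).support.card = 2 := by rw [hsupp]; simp [hab]
        have hcond : N - 2 = (Finset.univ.filter fun i => Equiv.swap a b i = i).card := by
          have := hcount (Equiv.swap a b)
          omega
        rw [if_pos hcond, hsupp, Finset.prod_pair hab, Equiv.swap_apply_left,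
          Equiv.swap_apply_right, Equiv.Perm.sign_swap hab]
        have : M b a * M a b = -(1 / ((G.degree a : ℝ) * (G.degree b : ℝ))) := by
          rw [hMskew a b]
          have := hMsq a b hadj'
          nlinarith [hMsq a b hadj']
        simp only [Sym2.lift_mk]
        push_cast
        nlinarith [this]
    · -- injectivity
      intro e1 h1 e2 h2 h12
      induction e1 with
      | _ a b =>
        induction e2 with
        | _ c d =>
          have hab : a ≠ b := by
            have : G.Adj a b := by simpa [SimpleGraph.mem_edgeFinset] using h1
            exact this.ne
          have hcd : c ≠ d := by
            have : G.Adj c d := by simpa [SimpleGraph.mem_edgeFinset] using h2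
            exact this.ne
          rw [swapOf_mk, swapOf_mk] at h12
          have hs := congrArg Equiv.Perm.support h12
          rw [Equiv.Perm.support_swap hab, Equiv.Perm.support_swap hcd] at hs
          exact sym2_eq_of_pair_finset_eq hab hs
  · -- vanishing off the image
    intro p _ hp
    by_cases hc : N - 2 = (Finset.univ.filter fun i => p i = i).card
    · have hk : p.support.card = 2 := by have := hcount p; omega
      obtain ⟨a, b, hab, rfl⟩ := Equiv.Perm.card_support_eq_two.mp hk
      have hnadj' : ¬ G.Adj a b := by
        intro h
        exact hp (Finset.mem_image.mpr ⟨s(a, b), by simpa [SimpleGraph.mem_edgeFinset], rfl⟩)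
      rw [if_pos hc, Equiv.Perm.support_swap hab, Finset.prod_pair hab,
        Equiv.swap_apply_left, Equiv.swap_apply_right,
        hM0 a b hnadj', hM0 b a (fun h => hnadj' h.symm)]
      simp
    · simp [hc]
end

section
/- Let G be a simple graph on a finite vertex set V with |V| = n and let σ be an orientation of G. Then RE_s(G^σ) ≤ 2·√(⌊n/2⌋·R_{−1}(G)). -/
open Matrix Polynomial

lemma charpoly_conj_eq {n R : Type*} [Fintype n] [DecidableEq n] [CommRing R]
    (P D Q : Matrix n n R) (hPQ : P * Q = 1) (hQP : Q * P = 1) :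
    (P * D * Q).charpoly = D.charpoly := by
  have hcm : charmatrix (P * D * Q) = P.map C * charmatrix D * Q.map C := by
    unfold charmatrix
    have h1 : (P.map (C : R →+* R[X]) : Matrix n n R[X]) * Q.map C = 1 := by
      rw [← Matrix.map_mul, hPQ, Matrix.map_one _ (map_zero _) (map_one _)]
    rw [mul_sub, sub_mul]
    congr 1
    · rw [mul_assoc, (Matrix.scalar_commute (X : R[X]) (Commute.all X) (Q.map C)).eq,
        ← mul_assoc, h1, one_mul]
    · rw [RingHom.mapMatrix_apply, RingHom.mapMatrix_apply, ← Matrix.map_mul, ← Matrix.map_mul]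
  unfold Matrix.charpoly
  rw [hcm, det_mul, det_mul, mul_comm, ← mul_assoc]
  have h2 : (Q.map (C : R →+* R[X])).det * (P.map C).det = 1 := by
    rw [← det_mul, ← Matrix.map_mul, hQP, Matrix.map_one _ (map_zero _) (map_one _), det_one]
  rw [h2, one_mul]

lemma charpoly_diagonal_roots {n : Type*} [Fintype n] [DecidableEq n] (d : n → ℂ) :
    (Matrix.diagonal d).charpoly.roots = Finset.univ.val.map d := by
  have h1 : charmatrix (Matrix.diagonal d) = Matrix.diagonal (fun i => X - C (d i)) := by
    ext i j
    rcases eq_or_ne i j with rfl | h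
    · simp [charmatrix_apply]
    · simp [charmatrix_apply, Matrix.diagonal_apply_ne _ h]
  have h2 : (Matrix.diagonal d).charpoly
      = ((Finset.univ.val.map d).map (fun a => X - C a)).prod := by
    rw [Matrix.charpoly, h1, det_diagonal, Multiset.map_map]
    rfl
  rw [h2, roots_multiset_prod_X_sub_C]

lemma edge_double_sum {V : Type*} [Fintype V] [DecidableEq V] (G : SimpleGraph V)
    [DecidableRel G.Adj] (f : V → V → ℝ) (hf : ∀ v w, f v w = f w v) :
    ∑ v, ∑ w, (if G.Adj v w then f v w else 0)
      = 2 * ∑ e ∈ G.edgeFinset, Sym2.lift ⟨f, hf⟩ e := by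
  have h1 : ∑ v, ∑ w, (if G.Adj v w then f v w else 0)
      = ∑ d : G.Dart, f d.toProd.1 d.toProd.2 := by
    rw [← Finset.sum_product']
    rw [← Finset.sum_filter]
    refine (Finset.sum_bij (fun (d : G.Dart) _ => d.toProd) ?_ ?_ ?_ ?_).symm
    · intro d _
      simp [d.adj]
    · intro d1 _ d2 _ h
      exact SimpleGraph.Dart.ext _ _ h
    · rintro ⟨v, w⟩ hp
      simp only [Finset.mem_filter] at hp
      exact ⟨⟨(v, w), hp.2⟩, Finset.mem_univ _, rfl⟩
    · intro d _
      rfl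
  have h2 : ∑ d : G.Dart, f d.toProd.1 d.toProd.2
      = ∑ d : G.Dart, Sym2.lift ⟨f, hf⟩ d.edge := by
    refine Finset.sum_congr rfl fun d _ => ?_
    rw [SimpleGraph.Dart.edge]
    rfl
  have h3 : ∑ d : G.Dart, Sym2.lift ⟨f, hf⟩ d.edge
      = ∑ e ∈ G.edgeFinset, 2 * Sym2.lift ⟨f, hf⟩ e := by
    rw [← Finset.sum_fiberwise_of_maps_to
      (g := SimpleGraph.Dart.edge) (t := G.edgeFinset)
      (fun d _ => by simp [SimpleGraph.Dart.edge_mem]) (fun d => Sym2.lift ⟨f, hf⟩ d.edge)]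
    refine Finset.sum_congr rfl fun e he => ?_
    rw [Finset.sum_congr rfl (fun d hd => by rw [(Finset.mem_filter.mp hd).2]),
      Finset.sum_const]
    have hc : (Finset.filter (fun d : G.Dart => d.edge = e) Finset.univ).card = 2 := by
      have := G.dart_edge_fiber_card e (SimpleGraph.mem_edgeFinset.mp he)
      convert this using 2
    rw [hc]
    rw [two_smul, two_mul]
  rw [h1, h2, h3, Finset.mul_sum]

theorem skewRandic_energy_upper_bound
    {V : Type*} [Fintype V] [DecidableEq V] (G : SimpleGraph V) [DecidableRel G.Adj]
    (σ : V → V → ℝ) (hσ : IsOrientation G σ) :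
    energy (skewRandicMatrix G σ)
      ≤ 2 * Real.sqrt ((Fintype.card V / 2 : ℕ) * randicIndexNegOne G) := by
  obtain ⟨hanti, hpm, hnadj⟩ := hσ
  set M : Matrix V V ℝ := skewRandicMatrix G σ with hMdef
  have hskew : ∀ v w, M w v = - M v w := by
    intro v w
    simp only [hMdef, skewRandicMatrix]
    rw [mul_comm ((G.degree w : ℝ)), show σ w v = -σ v w from by have := hanti v w; linarith,
      neg_div]
  set Mc : Matrix V V ℂ := M.map (fun x : ℝ => (x : ℂ)) with hMcdef
  set A : Matrix V V ℂ := Complex.I • Mc with hAdef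
  have hA : A.IsHermitian := by
    ext i j
    simp only [hAdef, Matrix.conjTranspose_apply, Matrix.smul_apply, Matrix.map_apply, hMcdef,
      smul_eq_mul, hskew i j]
    push_cast
    simp [Complex.conj_ofReal]
  set μ : V → ℝ := hA.eigenvalues with hμdef
  set U : Matrix V V ℂ := (hA.eigenvectorUnitary : Matrix V V ℂ) with hUdef
  have hU1 : U * star U = 1 := Matrix.mem_unitaryGroup_iff.mp hA.eigenvectorUnitary.2
  have hU2 : star U * U = 1 := Matrix.mem_unitaryGroup_iff'.mp hA.eigenvectorUnitary.2
  set d : V → ℂ := fun j => -Complex.I * ((μ j : ℝ) : ℂ) with hddef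
  -- the unitary diagonalization of `Mc`
  have hMcEq : Mc = U * Matrix.diagonal d * star U := by
    have h1 : Mc = (-Complex.I) • A := by
      rw [hAdef, smul_smul]
      simp [Complex.I_mul_I]
    have h2 : Matrix.diagonal (RCLike.ofReal ∘ hA.eigenvalues) = Complex.I • Matrix.diagonal d := by
      rw [← Matrix.diagonal_smul]
      refine congrArg Matrix.diagonal (funext fun j => ?_)
      show (RCLike.ofReal (μ j) : ℂ) = Complex.I * d j
      rw [hddef]
      show ((μ j : ℝ) : ℂ) = Complex.I * (-Complex.I * ((μ j : ℝ) : ℂ))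
      rw [← mul_assoc]
      simp [Complex.I_mul_I]
    rw [h1, hA.spectral_theorem, h2, Unitary.conjStarAlgAut_apply, ← hUdef, Matrix.mul_smul, Matrix.smul_mul, smul_smul]
    simp [Complex.I_mul_I]
  have hcp : Mc.charpoly = (Matrix.diagonal d).charpoly := by
    rw [hMcEq]
    exact charpoly_conj_eq U (Matrix.diagonal d) (star U) hU1 hU2
  have hroots : Mc.charpoly.roots = Finset.univ.val.map d := by
    rw [hcp, charpoly_diagonal_roots]
  have hspecM : spec M = Finset.univ.val.map d := by
    show (M.map (fun x : ℝ => (x : ℂ))).charpoly.roots = _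
    rw [← hMcdef]
    exact hroots
  -- energy in terms of eigenvalues
  have hE : energy M = ∑ j, |μ j| := by
    unfold energy
    rw [hspecM, Multiset.map_map]
    rw [show ((fun z => ‖z‖) ∘ d) = fun j => |μ j| from funext fun j => by
      simp [hddef, norm_mul, Complex.norm_real]]
    rfl
  -- sum of squares of eigenvalues
  have hsq : Mc * Mc = U * (Matrix.diagonal d * Matrix.diagonal d) * star U := by
    rw [hMcEq]
    simp only [Matrix.mul_assoc]
    rw [← Matrix.mul_assoc (star U) U, hU2, Matrix.one_mul]
  have htr2 : ∑ j, (μ j) ^ 2 = ∑ v, ∑ w, (M v w) ^ 2 := by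
    have h1 : (Mc * Mc).trace = -((∑ j, (μ j) ^ 2 : ℝ) : ℂ) := by
      rw [hsq, Matrix.trace_mul_cycle, ← Matrix.mul_assoc, hU2, Matrix.one_mul,
        Matrix.diagonal_mul_diagonal, Matrix.trace_diagonal]
      rw [Finset.sum_congr rfl (fun j _ => show d j * d j = -(((μ j : ℝ) : ℂ)) ^ 2 from by
        rw [hddef]; ring_nf; rw [Complex.I_sq]; ring)]
      push_cast
      rw [Finset.sum_neg_distrib]
    have h2 : (Mc * Mc).trace = -((∑ v, ∑ w, (M v w) ^ 2 : ℝ) : ℂ) := by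
      simp only [Matrix.trace, Matrix.diag, Matrix.mul_apply, hMcdef, Matrix.map_apply]
      rw [Finset.sum_congr rfl (fun v _ => Finset.sum_congr rfl (fun w _ =>
        show ((M v w : ℝ) : ℂ) * ((M w v : ℝ) : ℂ) = -(((M v w : ℝ) ^ 2 : ℝ) : ℂ) from by
          rw [hskew v w]; push_cast; ring))]
      push_cast
      simp [Finset.sum_neg_distrib]
    have h3 : ((∑ j, (μ j) ^ 2 : ℝ) : ℂ) = ((∑ v, ∑ w, (M v w) ^ 2 : ℝ) : ℂ) := by
      have := h1.symm.trans h2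
      exact neg_inj.mp this
    exact_mod_cast h3
  -- the eigenvalue multiset is symmetric under negation
  have hSneg : Finset.univ.val.map (fun j => -μ j) = Finset.univ.val.map μ := by
    have hrc : Mc.charpoly = M.charpoly.map (algebraMap ℝ ℂ) := by
      have hMM : Mc = M.map (algebraMap ℝ ℂ) := by
        ext v w
        simp [hMcdef]
      rw [hMM, Matrix.charpoly_map]
    have hconj : Mc.charpoly.map (starRingEnd ℂ) = Mc.charpoly := by
      rw [hrc, Polynomial.map_map]
      congr 1
      exact RingHom.ext fun x => Complex.conj_ofReal x
    have hrconj : Mc.charpoly.roots.map (starRingEnd ℂ) = Mc.charpoly.roots := by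
      have h := Polynomial.Splits.roots_map
        (IsAlgClosed.splits Mc.charpoly) (starRingEnd ℂ)
      rw [hconj] at h
      exact h.symm
    rw [hroots] at hrconj
    have h2 := congrArg (Multiset.map (fun z : ℂ => (Complex.I * z).re)) hrconj
    rw [Multiset.map_map, Multiset.map_map, Multiset.map_map] at h2
    calc Finset.univ.val.map (fun j => -μ j)
        = Finset.univ.val.map ((fun z : ℂ => (Complex.I * z).re) ∘ (starRingEnd ℂ) ∘ d) :=
          Multiset.map_congr rfl fun j _ => by
            simp [hddef, _root_.map_mul, Complex.conj_ofReal, ← mul_assoc, Complex.I_mul_I]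
      _ = Finset.univ.val.map ((fun z : ℂ => (Complex.I * z).re) ∘ d) := h2
      _ = Finset.univ.val.map μ :=
          Multiset.map_congr rfl fun j _ => by
            simp [hddef, ← mul_assoc, Complex.I_mul_I]
  -- counting: the support has size at most `2 * (n / 2)`
  have hc : (Finset.univ.filter (fun j => 0 < μ j)).card
      = (Finset.univ.filter (fun j => μ j < 0)).card := by
    have h := congrArg (Multiset.countP (fun x : ℝ => 0 < x)) hSneg
    rw [Multiset.countP_map, Multiset.countP_map] at h
    rw [Multiset.filter_congr (fun x _ => show (0 < -μ x) ↔ (μ x < 0) from neg_pos)] at h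
    rw [Finset.card_def, Finset.card_def, Finset.filter_val, Finset.filter_val]
    exact h.symm
  have hsupp_eq : (Finset.univ.filter (fun j => μ j ≠ 0))
      = (Finset.univ.filter (fun j => 0 < μ j)) ∪ (Finset.univ.filter (fun j => μ j < 0)) := by
    ext j
    simp only [Finset.mem_filter, Finset.mem_union, Finset.mem_univ, true_and]
    constructor
    · intro h
      rcases lt_or_gt_of_ne h with h' | h'
      · exact Or.inr h'
      · exact Or.inl h'
    · rintro (h | h)
      · exact h.ne'
      · exact h.ne
  have hdisj : Disjoint (Finset.univ.filter (fun j => 0 < μ j))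
      (Finset.univ.filter (fun j => μ j < 0)) := by
    rw [Finset.disjoint_filter]
    intro j _ h1 h2
    exact absurd h1 (not_lt.mpr h2.le)
  have hcard : (Finset.univ.filter (fun j => μ j ≠ 0)).card ≤ 2 * (Fintype.card V / 2) := by
    rw [hsupp_eq, Finset.card_union_of_disjoint hdisj, ← hc, ← two_mul]
    have hle : (Finset.univ.filter (fun j => 0 < μ j)).card ≤ Fintype.card V / 2 := by
      rw [Nat.le_div_iff_mul_le (by norm_num)]
      calc (Finset.univ.filter (fun j => 0 < μ j)).card * 2
          = (Finset.univ.filter (fun j => 0 < μ j)).card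
            + (Finset.univ.filter (fun j => μ j < 0)).card := by rw [← hc]; ring
        _ = ((Finset.univ.filter (fun j => 0 < μ j))
            ∪ (Finset.univ.filter (fun j => μ j < 0))).card :=
            (Finset.card_union_of_disjoint hdisj).symm
        _ ≤ Fintype.card V := Finset.card_le_univ _
    omega
  -- the sum of entry squares equals twice the Randić index
  have hM2 : ∀ v w, (M v w) ^ 2
      = if G.Adj v w then 1 / ((G.degree v : ℝ) * (G.degree w : ℝ)) else 0 := by
    intro v w
    by_cases h : G.Adj v w
    · have hdv : 0 < G.degree v := by
        rw [← SimpleGraph.card_neighborFinset_eq_degree]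
        exact Finset.card_pos.mpr ⟨w, by simp [h]⟩
      have hdw : 0 < G.degree w := by
        rw [← SimpleGraph.card_neighborFinset_eq_degree]
        exact Finset.card_pos.mpr ⟨v, by simp [h.symm]⟩
      have hprod : (0 : ℝ) < (G.degree v : ℝ) * (G.degree w : ℝ) := by
        have h1 : (0 : ℝ) < (G.degree v : ℝ) := by exact_mod_cast hdv
        have h2 : (0 : ℝ) < (G.degree w : ℝ) := by exact_mod_cast hdw
        exact mul_pos h1 h2
      have hσ2 : (σ v w) ^ 2 = 1 := by
        rcases hpm v w h with h1 | h1 <;> rw [h1] <;> norm_num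
      simp only [hMdef, skewRandicMatrix, if_pos h, div_pow, hσ2, Real.sq_sqrt hprod.le]
    · simp [hMdef, skewRandicMatrix, hnadj v w h, h]
  have hR : ∑ v, ∑ w, (M v w) ^ 2 = 2 * randicIndexNegOne G := by
    rw [Finset.sum_congr rfl (fun v _ => Finset.sum_congr rfl (fun w _ => hM2 v w))]
    rw [edge_double_sum G (fun v w => 1 / ((G.degree v : ℝ) * (G.degree w : ℝ)))
      (fun v w => by simp [mul_comm])]
    rfl
  -- nonnegativity of the Randić index
  have hR0 : 0 ≤ randicIndexNegOne G := by
    have h1 : 0 ≤ ∑ j, (μ j) ^ 2 := Finset.sum_nonneg fun j _ => sq_nonneg _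
    rw [htr2, hR] at h1
    linarith
  -- Cauchy–Schwarz over the support
  have hEsum : energy M = ∑ j ∈ Finset.univ.filter (fun j => μ j ≠ 0), |μ j| := by
    rw [hE]
    refine (Finset.sum_subset (Finset.filter_subset _ _) ?_).symm
    intro j _ hj
    simp only [Finset.mem_filter, Finset.mem_univ, true_and, not_not] at hj
    rw [hj, abs_zero]
  have hCS : (energy M) ^ 2
      ≤ ((Finset.univ.filter (fun j => μ j ≠ 0)).card : ℝ) * ∑ j, (μ j) ^ 2 := by
    rw [hEsum]
    calc (∑ j ∈ Finset.univ.filter (fun j => μ j ≠ 0), |μ j|) ^ 2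
        ≤ ((Finset.univ.filter (fun j => μ j ≠ 0)).card : ℝ)
          * ∑ j ∈ Finset.univ.filter (fun j => μ j ≠ 0), |μ j| ^ 2 :=
          sq_sum_le_card_mul_sum_sq
      _ ≤ ((Finset.univ.filter (fun j => μ j ≠ 0)).card : ℝ) * ∑ j, (μ j) ^ 2 := by
          refine mul_le_mul_of_nonneg_left ?_ (Nat.cast_nonneg _)
          rw [Finset.sum_congr rfl (fun j _ => sq_abs (μ j))]
          exact Finset.sum_le_sum_of_subset_of_nonneg (Finset.filter_subset _ _)
            (fun j _ _ => sq_nonneg _)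
  have hbound : (energy M) ^ 2
      ≤ 4 * (((Fintype.card V / 2 : ℕ) : ℝ) * randicIndexNegOne G) := by
    calc (energy M) ^ 2
        ≤ ((Finset.univ.filter (fun j => μ j ≠ 0)).card : ℝ) * ∑ j, (μ j) ^ 2 := hCS
      _ ≤ ((2 * (Fintype.card V / 2) : ℕ) : ℝ) * ∑ j, (μ j) ^ 2 := by
          refine mul_le_mul_of_nonneg_right ?_
            (Finset.sum_nonneg fun j _ => sq_nonneg _)
          exact_mod_cast hcard
      _ = ((2 * (Fintype.card V / 2) : ℕ) : ℝ) * (2 * randicIndexNegOne G) := by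
          rw [htr2, hR]
      _ = 4 * (((Fintype.card V / 2 : ℕ) : ℝ) * randicIndexNegOne G) := by
          push_cast
          ring
  have hE0 : 0 ≤ energy M := by
    rw [hE]
    exact Finset.sum_nonneg fun j _ => abs_nonneg _
  have hx0 : (0 : ℝ) ≤ ((Fintype.card V / 2 : ℕ) : ℝ) * randicIndexNegOne G :=
    mul_nonneg (Nat.cast_nonneg _) hR0
  have hfin : energy M ≤ Real.sqrt (4 * (((Fintype.card V / 2 : ℕ) : ℝ) * randicIndexNegOne G)) :=
    (Real.le_sqrt hE0 (by positivity)).mpr hbound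
  calc energy M
      ≤ Real.sqrt (4 * (((Fintype.card V / 2 : ℕ) : ℝ) * randicIndexNegOne G)) := hfin
    _ = 2 * Real.sqrt (((Fintype.card V / 2 : ℕ) : ℝ) * randicIndexNegOne G) := by
        rw [Real.sqrt_mul (by norm_num : (0:ℝ) ≤ 4)]
        congr 1
        rw [show (4:ℝ) = 2 ^ 2 by norm_num, Real.sqrt_sq (by norm_num)]
end

section
/- Let G be a simple graph on a finite vertex set V with |V| = n ≥ 2 and let σ be an orientation of G. Let p = |det R_s(G^σ)|. Then RE_s(G^σ) ≥ √(4·R_{−1}(G) + n·(n−2)·p^{2/n}). -/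
open Matrix Polynomial

section AuxProofs
open Matrix Polynomial Finset

variable {n R : Type*} [Fintype n] [DecidableEq n] [CommRing R]

lemma my_charpoly_conj (P Q A : Matrix n n R) (h1 : P * Q = 1) :
    (P * A * Q).charpoly = A.charpoly := by
  have h1' : (C : R →+* R[X]).mapMatrix P * (C : R →+* R[X]).mapMatrix Q = 1 := by
    rw [← _root_.map_mul, h1, _root_.map_one]
  have key : charmatrix (P * A * Q) =
      (C : R →+* R[X]).mapMatrix P * charmatrix A * (C : R →+* R[X]).mapMatrix Q := by
    unfold charmatrix
    rw [_root_.map_mul, _root_.map_mul, mul_sub, sub_mul]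
    congr 1
    rw [← (Matrix.scalar_commute (X : R[X]) (fun r' => Commute.all _ _)
      ((C : R →+* R[X]).mapMatrix P)).eq, mul_assoc, h1', mul_one]
  unfold Matrix.charpoly
  rw [key, det_mul, det_mul]
  have h2 : ((C : R →+* R[X]).mapMatrix P).det * ((C : R →+* R[X]).mapMatrix Q).det = 1 := by
    rw [← det_mul, h1', det_one]
  calc ((C : R →+* R[X]).mapMatrix P).det * (charmatrix A).det
        * ((C : R →+* R[X]).mapMatrix Q).det
      = ((C : R →+* R[X]).mapMatrix P).det * ((C : R →+* R[X]).mapMatrix Q).det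
        * (charmatrix A).det := by ring
    _ = (charmatrix A).det := by rw [h2, one_mul]

lemma my_charpoly_diagonal (d : n → R) :
    (Matrix.diagonal d).charpoly = ∏ i, (X - C (d i)) := by
  unfold Matrix.charpoly charmatrix
  have h : Matrix.scalar n (X : R[X]) - (C : R →+* R[X]).mapMatrix (Matrix.diagonal d)
      = Matrix.diagonal (fun i => X - C (d i)) := by
    rw [RingHom.mapMatrix_apply, Matrix.diagonal_map (map_zero C), Matrix.scalar_apply,
      Matrix.diagonal_sub]
  rw [h, det_diagonal]

lemma my_charpoly_transpose (A : Matrix n n R) : Aᵀ.charpoly = A.charpoly := by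
  unfold Matrix.charpoly charmatrix
  have h : Matrix.scalar n (X : R[X]) - (C : R →+* R[X]).mapMatrix Aᵀ
      = (Matrix.scalar n (X : R[X]) - (C : R →+* R[X]).mapMatrix A)ᵀ := by
    rw [Matrix.transpose_sub, RingHom.mapMatrix_apply, RingHom.mapMatrix_apply,
      Matrix.transpose_map, Matrix.scalar_apply, Matrix.diagonal_transpose]
  rw [h, det_transpose]

lemma my_roots_charpoly_diagonal {K : Type*} [Field K] [IsAlgClosed K]
    (d : n → K) : (Matrix.diagonal d).charpoly.roots = (univ.val : Multiset n).map d := by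
  rw [my_charpoly_diagonal, Finset.prod_eq_multiset_prod]
  have h : Multiset.map (fun i => X - C (d i)) univ.val
      = Multiset.map (fun a => X - C a) (univ.val.map d) := by
    rw [Multiset.map_map]; rfl
  rw [h, Polynomial.roots_multiset_prod_X_sub_C]

variable {V : Type*} [Fintype V] [DecidableEq V]

lemma skew_spectral (M : Matrix V V ℝ) (hM : Mᵀ = -M) :
    ∃ ε : V → ℝ,
      ((univ.val : Multiset V).map ε).map (fun x => -x) = (univ.val : Multiset V).map ε ∧
      spec M = (univ.val : Multiset V).map (fun i => -Complex.I * (ε i : ℂ)) ∧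
      (∑ i, (ε i)^2 : ℝ) = ∑ v, ∑ w, (M v w)^2 ∧
      |M.det| = ∏ i, |ε i| := by
  set Mc : Matrix V V ℂ := M.map (fun x : ℝ => (x : ℂ)) with hMc
  have hswap : ∀ v w, M w v = -M v w := by
    intro v w; rw [← Matrix.transpose_apply M v w, hM]; rfl
  have hMcT : Mcᵀ = -Mc := by
    ext i j
    simp only [Mc, Matrix.transpose_apply, Matrix.map_apply, Matrix.neg_apply]
    rw [hswap i j]; push_cast; ring
  have hH : (Complex.I • Mc).IsHermitian := by
    unfold Matrix.IsHermitian
    ext i j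
    simp only [Matrix.conjTranspose_apply, Matrix.smul_apply, Matrix.map_apply, Mc,
      smul_eq_mul, star_mul', Complex.star_def, Complex.conj_I, Complex.conj_ofReal]
    rw [hswap i j]; push_cast; ring
  set H := Complex.I • Mc
  set ε := hH.eigenvalues with hε
  set U : Matrix V V ℂ := (hH.eigenvectorUnitary : Matrix V V ℂ) with hU
  have hU1 : U * star U = 1 := Matrix.mem_unitaryGroup_iff.mp hH.eigenvectorUnitary.2
  have hU2 : star U * U = 1 := Matrix.mem_unitaryGroup_iff'.mp hH.eigenvectorUnitary.2
  have hspec : H = U * Matrix.diagonal (fun i => (ε i : ℂ)) * star U := by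
    have := hH.spectral_theorem
    exact this.trans (Unitary.conjStarAlgAut_apply _ _)
  have hMceq : Mc = U * Matrix.diagonal (fun i => -Complex.I * (ε i : ℂ)) * star U := by
    have h2 : Mc = (-Complex.I) • H := by
      rw [show H = Complex.I • Mc from rfl, smul_smul]
      norm_num [Complex.I_mul_I]
    rw [h2, hspec, mul_assoc, ← mul_smul_comm, ← smul_mul_assoc, ← mul_assoc,
      ← Matrix.diagonal_smul]
    rfl
  have hroots : spec M = (univ.val : Multiset V).map (fun i => -Complex.I * (ε i : ℂ)) := by
    show Mc.charpoly.roots = _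
    rw [hMceq, my_charpoly_conj U (star U) _ hU1, my_roots_charpoly_diagonal]
  have hMcneq : -Mc = U * Matrix.diagonal (fun i => Complex.I * (ε i : ℂ)) * star U := by
    have hd : Matrix.diagonal (fun i => Complex.I * (ε i : ℂ))
        = - Matrix.diagonal (fun i => -Complex.I * (ε i : ℂ)) := by
      ext i j
      by_cases h : i = j
      · subst h; simp only [Matrix.diagonal_apply_eq, Matrix.neg_apply]; ring
      · simp [Matrix.diagonal_apply_ne _ h]
    rw [hMceq, hd, mul_neg, neg_mul]
  have hrootsneg : (univ.val : Multiset V).map (fun i => -Complex.I * (ε i : ℂ))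
      = (univ.val : Multiset V).map (fun i => Complex.I * (ε i : ℂ)) := by
    rw [← hroots]
    show Mc.charpoly.roots = _
    rw [show Mc.charpoly = (-Mc).charpoly by rw [← hMcT, my_charpoly_transpose],
      hMcneq, my_charpoly_conj U (star U) _ hU1, my_roots_charpoly_diagonal]
  -- negation symmetry
  have h4 := congrArg (Multiset.map (fun z => Complex.I * z)) hrootsneg
  rw [Multiset.map_map, Multiset.map_map] at h4
  have h5 : (univ.val : Multiset V).map (fun i => ((ε i : ℝ) : ℂ))
      = (univ.val : Multiset V).map (fun i => ((-ε i : ℝ) : ℂ)) := by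
    calc (univ.val : Multiset V).map (fun i => ((ε i : ℝ) : ℂ))
        = (univ.val : Multiset V).map ((fun z => Complex.I * z) ∘ fun i => -Complex.I * (ε i : ℂ)) := by
          refine Multiset.map_congr rfl fun i _ => ?_
          show ((ε i : ℝ) : ℂ) = Complex.I * (-Complex.I * (ε i : ℂ))
          rw [show Complex.I * (-Complex.I * (ε i : ℂ)) = -(Complex.I * Complex.I) * (ε i : ℂ) by ring,
            Complex.I_mul_I]
          ring
      _ = (univ.val : Multiset V).map ((fun z => Complex.I * z) ∘ fun i => Complex.I * (ε i : ℂ)) := h4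
      _ = (univ.val : Multiset V).map (fun i => ((-ε i : ℝ) : ℂ)) := by
          refine Multiset.map_congr rfl fun i _ => ?_
          show Complex.I * (Complex.I * (ε i : ℂ)) = ((-ε i : ℝ) : ℂ)
          rw [show Complex.I * (Complex.I * (ε i : ℂ)) = (Complex.I * Complex.I) * (ε i : ℂ) by ring,
            Complex.I_mul_I]
          push_cast; ring
  have hsym : ((univ.val : Multiset V).map ε).map (fun x => -x)
      = (univ.val : Multiset V).map ε := by
    have h6 : (univ.val : Multiset V).map ε = (univ.val : Multiset V).map (fun i => -ε i) := by
      apply Multiset.map_injective (Complex.ofReal_injective)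
      rw [Multiset.map_map, Multiset.map_map]
      exact h5
    rw [Multiset.map_map]
    exact h6.symm
  -- trace
  have wayA : (Mc * Mc).trace = ((- ∑ v, ∑ w, (M v w)^2 : ℝ) : ℂ) := by
    have hA2 : ∀ v w : V, M v w * M w v = -(M v w)^2 := fun v w => by rw [hswap v w]; ring
    simp only [Matrix.trace, Matrix.diag_apply, Matrix.mul_apply, Matrix.map_apply, Mc]
    push_cast
    rw [← Finset.sum_neg_distrib]
    refine Finset.sum_congr rfl fun v _ => ?_
    rw [← Finset.sum_neg_distrib]
    refine Finset.sum_congr rfl fun w _ => ?_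
    rw [← Complex.ofReal_mul, hA2 v w]
    push_cast; ring
  have wayB : (Mc * Mc).trace = ((- ∑ i, (ε i)^2 : ℝ) : ℂ) := by
    rw [hMceq]
    rw [show U * Matrix.diagonal (fun i => -Complex.I * (ε i : ℂ)) * star U
        * (U * Matrix.diagonal (fun i => -Complex.I * (ε i : ℂ)) * star U)
        = U * ((Matrix.diagonal (fun i => -Complex.I * (ε i : ℂ))
          * (star U * U) * Matrix.diagonal (fun i => -Complex.I * (ε i : ℂ))) * star U) by
      simp only [mul_assoc]]
    rw [Matrix.trace_mul_comm, hU2, mul_one, mul_assoc, Matrix.trace_mul_comm, ← mul_assoc,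
      hU2, one_mul, Matrix.diagonal_mul_diagonal, Matrix.trace_diagonal]
    push_cast
    rw [← Finset.sum_neg_distrib]
    refine Finset.sum_congr rfl fun i _ => ?_
    rw [show -Complex.I * (ε i : ℂ) * (-Complex.I * (ε i : ℂ))
        = (Complex.I * Complex.I) * ((ε i : ℂ) * (ε i : ℂ)) by ring, Complex.I_mul_I]
    ring
  have htr : (∑ i, (ε i)^2 : ℝ) = ∑ v, ∑ w, (M v w)^2 := by
    have h7 := Complex.ofReal_injective (wayA.symm.trans wayB)
    linarith [h7]
  -- det
  have hdet : Mc.det = ((M.det : ℝ) : ℂ) := by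
    rw [show Mc = (Complex.ofRealHom).mapMatrix M from rfl, ← RingHom.map_det]
    rfl
  have hdet2 : Mc.det = ∏ i, (-Complex.I * (ε i : ℂ)) := by
    rw [hMceq, det_mul, det_mul, mul_comm, ← mul_assoc, ← det_mul, hU2, det_one, one_mul,
      det_diagonal]
  have hdetfin : |M.det| = ∏ i, |ε i| := by
    have h8 : |M.det| = ‖(((M.det : ℝ) : ℂ))‖ := by rw [Complex.norm_real, Real.norm_eq_abs]
    rw [h8, ← hdet, hdet2, norm_prod]
    refine Finset.prod_congr rfl fun i _ => ?_
    rw [norm_mul]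
    simp
  exact ⟨ε, hsym, hroots, htr, hdetfin⟩

lemma core_indexed (m : ℕ) (hm : 2 ≤ m) (f : Fin m → ℝ) (hf : ∀ i, 0 < f i) :
    ((m:ℝ) * ((m:ℝ) - 1)) * (∏ i, f i) ^ ((2:ℝ)/(m:ℝ)) ≤ (∑ i, f i)^2 - ∑ i, (f i)^2 := by
  set q : ℝ := ∏ i, f i with hqdef
  have hq : 0 < q := Finset.prod_pos fun i _ => hf i
  set D : ℝ := ∑ p ∈ (univ : Finset (Fin m)).offDiag, f p.1 * f p.2 with hDdef
  have hid : (∑ i, f i)^2 = (∑ i, (f i)^2) + D := by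
    rw [pow_two, Finset.sum_mul_sum, ← Finset.sum_product', ← Finset.diag_union_offDiag
      (univ : Finset (Fin m)), Finset.sum_union (Finset.disjoint_diag_offDiag _),
      Finset.sum_diag]
    congr 1
    exact Finset.sum_congr rfl fun i _ => (pow_two (f i)).symm
  set N : ℕ := m * m - m with hNdef
  have hNcard : (univ : Finset (Fin m)).offDiag.card = N := by
    rw [Finset.offDiag_card, Finset.card_univ, Fintype.card_fin]
  have h2m : 2 * m ≤ m * m := Nat.mul_le_mul_right m hm
  have hNpos : 0 < N := by omega
  have hNR : (0:ℝ) < (N:ℝ) := by exact_mod_cast hNpos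
  have hz : ∀ p ∈ (univ : Finset (Fin m)).offDiag, (0:ℝ) ≤ f p.1 * f p.2 :=
    fun p _ => le_of_lt (mul_pos (hf _) (hf _))
  have hw : ∀ p ∈ (univ : Finset (Fin m)).offDiag, (0:ℝ) ≤ (N:ℝ)⁻¹ :=
    fun p _ => inv_nonneg.mpr hNR.le
  have hwsum : ∑ _p ∈ (univ : Finset (Fin m)).offDiag, (N:ℝ)⁻¹ = 1 := by
    rw [Finset.sum_const, hNcard, nsmul_eq_mul, mul_inv_cancel₀ hNR.ne']
  have amgm := Real.geom_mean_le_arith_mean_weighted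
    (univ : Finset (Fin m)).offDiag (fun _ => (N:ℝ)⁻¹) (fun p => f p.1 * f p.2) hw hwsum hz
  rw [Real.finset_prod_rpow _ _ hz] at amgm
  have hprodall : ∏ p ∈ (univ ×ˢ univ : Finset (Fin m × Fin m)), (f p.1 * f p.2) = q^(2*m) := by
    rw [Finset.prod_product]
    have h1 : ∀ x : Fin m, ∏ y, (f x * f y) = f x ^ m * q := by
      intro x
      rw [Finset.prod_mul_distrib, Finset.prod_const, Finset.card_univ, Fintype.card_fin]
    rw [Finset.prod_congr rfl fun x _ => h1 x, Finset.prod_mul_distrib, Finset.prod_const,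
      Finset.prod_pow, Finset.card_univ, Fintype.card_fin, ← hqdef, ← pow_add, two_mul]
  have hproddiag : ∏ p ∈ (univ : Finset (Fin m)).diag, (f p.1 * f p.2) = q^2 := by
    rw [Finset.prod_diag, pow_two, ← Finset.prod_mul_distrib]
  have hsplit : q^(2*m) = q^2 * ∏ p ∈ (univ : Finset (Fin m)).offDiag, (f p.1 * f p.2) := by
    rw [← hprodall, ← hproddiag, ← Finset.prod_union (Finset.disjoint_diag_offDiag _),
      Finset.diag_union_offDiag]
  have hprodoff : ∏ p ∈ (univ : Finset (Fin m)).offDiag, (f p.1 * f p.2) = q^(2*m-2) := by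
    have h3 : q^(2*m) = q^2 * q^(2*m-2) := by rw [← pow_add]; congr 1; omega
    exact (mul_left_cancel₀ (pow_ne_zero 2 hq.ne') (by rw [← hsplit, h3])).symm
  rw [hprodoff] at amgm
  have hrp : (q^(2*m-2) : ℝ) ^ ((N:ℝ)⁻¹) = q ^ ((2:ℝ)/(m:ℝ)) := by
    rw [← Real.rpow_natCast q (2*m-2), ← Real.rpow_mul hq.le]
    congr 1
    have hc1 : ((2*m-2 : ℕ):ℝ) = 2*(m:ℝ) - 2 := by
      rw [Nat.cast_sub (by omega : 2 ≤ 2*m)]; push_cast; ring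
    have hc2 : ((N:ℕ):ℝ) = (m:ℝ)*(m:ℝ) - (m:ℝ) := by
      rw [hNdef, Nat.cast_sub (by omega : m ≤ m*m)]; push_cast; ring
    rw [hc1, hc2]
    have hm0 : (m:ℝ) ≠ 0 := Nat.cast_ne_zero.mpr (by omega)
    have hN0 : (m:ℝ)*(m:ℝ) - (m:ℝ) ≠ 0 := by rw [← hc2]; exact hNR.ne'
    rw [eq_div_iff hm0, show (2*(m:ℝ) - 2) * ((m:ℝ)*(m:ℝ) - (m:ℝ))⁻¹ * (m:ℝ) = (2*(m:ℝ) - 2) * (m:ℝ) * ((m:ℝ)*(m:ℝ) - (m:ℝ))⁻¹ by ring,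
      show (2*(m:ℝ) - 2) * (m:ℝ) = 2 * ((m:ℝ)*(m:ℝ) - (m:ℝ)) by ring, mul_assoc, mul_inv_cancel₀ hN0, mul_one]
  rw [hrp, ← Finset.mul_sum] at amgm
  have hNR2 : ((N:ℕ):ℝ) = (m:ℝ)*((m:ℝ)-1) := by
    rw [hNdef, Nat.cast_sub (by omega : m ≤ m*m)]; push_cast; ring
  have hfin : (m:ℝ)*((m:ℝ)-1) * q ^ ((2:ℝ)/(m:ℝ)) ≤ D := by
    calc (m:ℝ)*((m:ℝ)-1) * q ^ ((2:ℝ)/(m:ℝ)) = (N:ℝ) * (q ^ ((2:ℝ)/(m:ℝ))) := by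
          rw [hNR2]
      _ ≤ (N:ℝ) * ((N:ℝ)⁻¹ * D) := mul_le_mul_of_nonneg_left amgm hNR.le
      _ = D := by field_simp
  linarith [hid, hfin]

lemma multiset_exists_index (u : Multiset ℝ) :
    ∃ (m : ℕ) (f : Fin m → ℝ), Multiset.card u = m ∧ (univ : Finset (Fin m)).val.map f = u := by
  induction u using Quotient.inductionOn with
  | h l =>
    refine ⟨l.length, l.get, by simp, ?_⟩
    have huniv : (univ : Finset (Fin l.length)).val = ↑(List.finRange l.length) := rfl
    rw [huniv, Multiset.map_coe]
    exact congrArg _ (List.map_get_finRange l)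
lemma msum_sq_le (u : Multiset ℝ) (h : ∀ x ∈ u, 0 ≤ x) :
    (u.map (fun x => x^2)).sum ≤ u.sum ^ 2 := by
  induction u using Multiset.induction_on with
  | empty => simp
  | cons a s ih =>
    have ha : 0 ≤ a := h a (Multiset.mem_cons_self a s)
    have hs' : ∀ x ∈ s, 0 ≤ x := fun x hx => h x (Multiset.mem_cons_of_mem hx)
    have hs : 0 ≤ s.sum := Multiset.sum_nonneg hs'
    have := ih hs'
    simp only [Multiset.map_cons, Multiset.sum_cons]
    nlinarith [this, ha, hs]

lemma core_multiset (u : Multiset ℝ) (hpos : ∀ x ∈ u, 0 < x) (hm : 1 ≤ Multiset.card u) :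
    (u.map (fun x => x^2)).sum
      + (Multiset.card u : ℝ) * ((Multiset.card u : ℝ) - 1) * u.prod ^ ((2:ℝ)/(Multiset.card u : ℝ))
      ≤ u.sum ^ 2 := by
  obtain ⟨m, f, hcard, hf⟩ := multiset_exists_index u
  rw [hcard] at hm ⊢
  have hfs : u.sum = ∑ i, f i := by rw [← hf, Finset.sum_eq_multiset_sum]
  have hfp : u.prod = ∏ i, f i := by rw [← hf, Finset.prod_eq_multiset_prod]
  have hfq : (u.map (fun x => x^2)).sum = ∑ i, (f i)^2 := by
    rw [← hf, Multiset.map_map, Finset.sum_eq_multiset_sum]; rfl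
  have hfpos : ∀ i, 0 < f i := by
    intro i
    apply hpos
    rw [← hf]
    exact Multiset.mem_map_of_mem f (by simp)
  by_cases h2 : 2 ≤ m
  · have := core_indexed m h2 f hfpos
    rw [hfs, hfp, hfq]
    linarith
  · have hm1 : ((m:ℝ) - 1) = 0 := by
      have : m = 1 := by omega
      rw [this]; norm_num
    rw [hfs, hfq, hm1, mul_zero, zero_mul, add_zero]
    rw [← hfq, ← hfs]
    exact msum_sq_le u fun x hx => (hpos x hx).le

lemma key_ineq (t : Multiset ℝ) (hn : 2 ≤ Multiset.card t)
    (hsym : t.map (fun x => -x) = t) :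
    Real.sqrt (2 * (t.map (fun x => x^2)).sum +
      (Multiset.card t : ℝ) * ((Multiset.card t : ℝ) - 2) *
        ((t.map (fun x => |x|)).prod) ^ ((2:ℝ) / (Multiset.card t : ℝ)))
      ≤ (t.map (fun x => |x|)).sum := by
  classical
  set u := t.filter (fun x => 0 < x) with hu
  set w := t.filter (fun x => ¬ 0 < x) with hw
  have htuw : u + w = t := Multiset.filter_add_not _ t
  set w1 := w.filter (fun x => x < 0) with hw1
  set w2 := w.filter (fun x => ¬ x < 0) with hw2
  have hw12 : w1 + w2 = w := Multiset.filter_add_not _ w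
  have hu_pos : ∀ x ∈ u, 0 < x := by
    intro x hx; rw [hu] at hx; exact (Multiset.mem_filter.mp hx).2
  have hw1_neg : ∀ x ∈ w1, x < 0 := by
    intro x hx; rw [hw1] at hx; exact (Multiset.mem_filter.mp hx).2
  have hw2_zero : ∀ x ∈ w2, x = 0 := by
    intro x hx
    rw [hw2] at hx
    have h1 : ¬ x < 0 := (Multiset.mem_filter.mp hx).2
    have hxw := Multiset.mem_of_mem_filter hx
    rw [hw] at hxw
    have h2 : ¬ 0 < x := (Multiset.mem_filter.mp hxw).2
    linarith
  have husym : u = w1.map (fun x => -x) := by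
    calc u = (t.map (fun x => -x)).filter (fun x => 0 < x) := by rw [hsym]
      _ = (t.filter ((fun x => (0:ℝ) < x) ∘ (fun x => -x))).map (fun x => -x) :=
          Multiset.filter_map _ _ _
      _ = (t.filter (fun x => x < 0)).map (fun x => -x) := by
          congr 1
          apply Multiset.filter_congr
          intro x _
          show 0 < -x ↔ x < 0
          exact neg_pos
      _ = w1.map (fun x => -x) := by
          congr 1
          rw [hw1, hw, Multiset.filter_filter]
          apply Multiset.filter_congr
          intro x _
          constructor
          · intro hx; exact ⟨hx, by linarith⟩
          · intro hx; exact hx.1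
  have habs_u : u.map (fun x => |x|) = u := by
    rw [Multiset.map_congr rfl (fun x hx => abs_of_pos (hu_pos x hx)), Multiset.map_id']
  have habs_w1 : w1.map (fun x => |x|) = u := by
    rw [Multiset.map_congr rfl (fun x hx => abs_of_neg (hw1_neg x hx)), ← husym]
  have habs_w2 : w2.map (fun x => |x|) = w2.map (fun _ => (0:ℝ)) :=
    Multiset.map_congr rfl (fun x hx => by rw [hw2_zero x hx]; simp)
  have hsq_w1 : w1.map (fun x => x^2) = u.map (fun x => x^2) := by
    rw [husym, Multiset.map_map]
    exact Multiset.map_congr rfl (fun x _ => by simp)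
  have hsq_w2 : w2.map (fun x => x^2) = w2.map (fun _ => (0:ℝ)) :=
    Multiset.map_congr rfl (fun x hx => by rw [hw2_zero x hx]; simp)
  set S := u.sum with hS
  set Q2 := (u.map (fun x => x^2)).sum with hQ2
  have hS0 : 0 ≤ S := Multiset.sum_nonneg fun x hx => (hu_pos x hx).le
  have hsum_abs : (t.map (fun x => |x|)).sum = 2 * S := by
    rw [← htuw, ← hw12, Multiset.map_add, Multiset.map_add, Multiset.sum_add,
      Multiset.sum_add, habs_u, habs_w1, habs_w2]
    simp [two_mul]
    rfl
  have hQ : (t.map (fun x => x^2)).sum = 2 * Q2 := by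
    rw [← htuw, ← hw12, Multiset.map_add, Multiset.map_add, Multiset.sum_add,
      Multiset.sum_add, hsq_w1, hsq_w2]
    simp [two_mul]
    rfl
  have hQ2nn : Q2 ≤ S^2 := msum_sq_le u fun x hx => (hu_pos x hx).le
  rw [hsum_abs, hQ]
  have hsqr : ∀ E : ℝ, E ≤ (2*S)^2 → Real.sqrt E ≤ 2*S := by
    intro E hE
    calc Real.sqrt E ≤ Real.sqrt ((2*S)^2) := Real.sqrt_le_sqrt hE
      _ = 2*S := Real.sqrt_sq (by linarith)
  have hprod_split : (t.map (fun x => |x|)).prod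
      = u.prod * u.prod * (w2.map (fun _ => (0:ℝ))).prod := by
    rw [← htuw, ← hw12, Multiset.map_add, Multiset.map_add, Multiset.prod_add,
      Multiset.prod_add, habs_u, habs_w1, habs_w2]
    ring
  by_cases hz : w2 = 0
  · -- no zero entries
    set m := Multiset.card u with hm
    have hcardw1 : Multiset.card w1 = m := by rw [hm, husym, Multiset.card_map]
    have hn2 : Multiset.card t = 2 * m := by
      rw [← htuw, ← hw12, hz]
      simp [Multiset.card_add, hcardw1, two_mul]
      rfl
    have hm1 : 1 ≤ m := by omega
    have hmR : (0:ℝ) < (m:ℝ) := by exact_mod_cast hm1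
    set q := u.prod with hq
    have hq0 : 0 < q := Multiset.prod_pos hu_pos
    have hPq : (t.map (fun x => |x|)).prod = q^2 := by
      rw [hprod_split, hz]
      simp [pow_two]
    have hexp : ((q^2 : ℝ)) ^ ((2:ℝ)/((Multiset.card t : ℕ):ℝ)) = q ^ ((2:ℝ)/(m:ℝ)) := by
      rw [hn2, ← Real.rpow_natCast q 2, ← Real.rpow_mul hq0.le]
      congr 1
      push_cast
      field_simp
    have hcore := core_multiset u hu_pos hm1
    rw [← hq, ← hQ2, ← hS] at hcore
    apply hsqr
    rw [hPq, hexp]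
    have hcoef : ((Multiset.card t : ℕ):ℝ) * (((Multiset.card t : ℕ):ℝ) - 2)
        = 4 * ((m:ℝ) * ((m:ℝ) - 1)) := by
      rw [hn2]; push_cast; ring
    rw [hcoef]
    nlinarith [hcore]
  · -- a zero entry exists
    obtain ⟨x, hx⟩ := Multiset.exists_mem_of_ne_zero hz
    have hP0 : (t.map (fun x => |x|)).prod = 0 := by
      rw [hprod_split]
      have : (0:ℝ) ∈ w2.map (fun _ => (0:ℝ)) := Multiset.mem_map_of_mem _ hx
      rw [Multiset.prod_eq_zero this]
      ring
    rw [hP0, Real.zero_rpow, mul_zero, add_zero]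
    · apply hsqr
      nlinarith [hQ2nn, hS0]
    · have : (0:ℝ) < (Multiset.card t : ℝ) := by
        have : 0 < Multiset.card t := by omega
        exact_mod_cast this
      positivity


variable {V' : Type*}
lemma entry_sq (G : SimpleGraph V) [DecidableRel G.Adj] (σ : V → V → ℝ)
    (hσ : IsOrientation G σ) (v w : V) :
    (skewRandicMatrix G σ v w)^2
      = if G.Adj v w then 1 / ((G.degree v : ℝ) * (G.degree w : ℝ)) else 0 := by
  by_cases h : G.Adj v w
  · rw [if_pos h]
    have hd : (0:ℝ) ≤ (G.degree v : ℝ) * (G.degree w : ℝ) := by positivity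
    have hσ2 : (σ v w)^2 = 1 := by
      rcases hσ.2.1 v w h with h1 | h1 <;> rw [h1] <;> norm_num
    rw [skewRandicMatrix, div_pow, hσ2, Real.sq_sqrt hd]
  · rw [if_neg h, skewRandicMatrix, hσ.2.2 v w h, zero_div]
    norm_num

lemma graph_sum (G : SimpleGraph V) [DecidableRel G.Adj] (σ : V → V → ℝ)
    (hσ : IsOrientation G σ) :
    ∑ v, ∑ w, (skewRandicMatrix G σ v w)^2 = 2 * randicIndexNegOne G := by
  have step1 : ∑ v, ∑ w, (skewRandicMatrix G σ v w)^2
      = ∑ p ∈ (univ ×ˢ univ : Finset (V × V)).filter (fun p => G.Adj p.1 p.2),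
          1 / ((G.degree p.1 : ℝ) * (G.degree p.2 : ℝ)) := by
    rw [Finset.sum_filter, ← Finset.sum_product']
    exact Finset.sum_congr rfl fun p _ => entry_sq G σ hσ p.1 p.2
  rw [step1]
  have hmaps : ∀ p ∈ (univ ×ˢ univ : Finset (V × V)).filter (fun p => G.Adj p.1 p.2),
      Sym2.mk p.1 p.2 ∈ G.edgeFinset := by
    intro p hp
    rw [Finset.mem_filter] at hp
    rw [SimpleGraph.mem_edgeFinset]
    exact hp.2
  rw [← Finset.sum_fiberwise_of_maps_to hmaps
    (fun p => 1 / ((G.degree p.1 : ℝ) * (G.degree p.2 : ℝ)))]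
  rw [randicIndexNegOne, Finset.mul_sum]
  refine Finset.sum_congr rfl fun e he => ?_
  induction e with
  | _ a b =>
    rw [SimpleGraph.mem_edgeFinset, SimpleGraph.mem_edgeSet] at he
    have hne : a ≠ b := G.ne_of_adj he
    have hfib : ((univ ×ˢ univ : Finset (V × V)).filter (fun p => G.Adj p.1 p.2)).filter
        (fun p => Sym2.mk p.1 p.2 = s(a, b)) = {(a, b), (b, a)} := by
      ext ⟨x, y⟩
      simp only [Finset.mem_filter, Finset.mem_product, Finset.mem_univ, true_and,
        Finset.mem_insert, Finset.mem_singleton, Prod.mk.injEq, Sym2.eq_iff]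
      constructor
      · rintro ⟨_, (⟨rfl, rfl⟩ | ⟨rfl, rfl⟩)⟩
        · left; exact ⟨rfl, rfl⟩
        · right; exact ⟨rfl, rfl⟩
      · rintro (⟨rfl, rfl⟩ | ⟨rfl, rfl⟩)
        · exact ⟨he, Or.inl ⟨rfl, rfl⟩⟩
        · exact ⟨he.symm, Or.inr ⟨rfl, rfl⟩⟩
    rw [hfib, Finset.sum_pair (by simp [hne, Prod.ext_iff] : ((a,b) : V × V) ≠ (b,a))]
    rw [Sym2.lift_mk]
    simp only []
    rw [mul_comm (G.degree b : ℝ)]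
    ring

end AuxProofs

theorem skewRandic_energy_lower_bound
    {V : Type*} [Fintype V] [DecidableEq V] (G : SimpleGraph V) [DecidableRel G.Adj]
    (σ : V → V → ℝ) (hσ : IsOrientation G σ) (hn : 2 ≤ Fintype.card V) :
    Real.sqrt (4 * randicIndexNegOne G +
        (Fintype.card V : ℝ) * ((Fintype.card V : ℝ) - 2) *
          |(skewRandicMatrix G σ).det| ^ ((2 : ℝ) / (Fintype.card V : ℝ)))
      ≤ energy (skewRandicMatrix G σ) := by
  classical
  set M := skewRandicMatrix G σ with hMdef
  have hM : Mᵀ = -M := by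
    ext v w
    simp only [Matrix.transpose_apply, Matrix.neg_apply, hMdef, skewRandicMatrix]
    rw [mul_comm ((G.degree w : ℝ))]
    have h1 := hσ.1 v w
    have h2 : σ w v = -σ v w := by linarith
    rw [h2, neg_div]
  obtain ⟨ε, hsym, hroots, htr, hdet⟩ := skew_spectral M hM
  set t : Multiset ℝ := (Finset.univ.val : Multiset V).map ε with htdef
  have hcardt : Multiset.card t = Fintype.card V := by
    rw [htdef, Multiset.card_map]
    rfl
  have hE : energy M = (t.map (fun x => |x|)).sum := by
    rw [energy,
      show spec M = Multiset.map (fun i => -Complex.I * (ε i : ℂ)) Finset.univ.val from hroots,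
      Multiset.map_map, htdef, Multiset.map_map]
    refine congrArg Multiset.sum (Multiset.map_congr rfl fun i _ => ?_)
    show ‖(-Complex.I * (ε i : ℂ))‖ = |ε i|
    rw [norm_mul]
    simp
  have hsum_sq : (t.map (fun x => x^2)).sum = ∑ i, (ε i)^2 := by
    rw [htdef, Multiset.map_map, Finset.sum_eq_multiset_sum]
    rfl
  have hprod_abs : (t.map (fun x => |x|)).prod = ∏ i, |ε i| := by
    rw [htdef, Multiset.map_map, Finset.prod_eq_multiset_prod]
    rfl
  have h4R : 4 * randicIndexNegOne G = 2 * (t.map (fun x => x^2)).sum := by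
    rw [hsum_sq, htr, graph_sum G σ hσ]
    ring
  have hdet' : |M.det| = (t.map (fun x => |x|)).prod := by rw [hdet, hprod_abs]
  have key := key_ineq t (by rw [hcardt]; exact hn) hsym
  rw [hE, h4R, hdet', ← hcardt]
  exact key
end

section
/- Let G be a simple graph on a finite vertex set V with |V| = n ≥ 2 that has no isolated vertices, and let σ be any orientation of G. Then RE_s(G^σ) = 2·⌊n/2⌋ if and only if either (i) n is even and every vertex of G has degree 1 (G is a disjoint union of single edges), or (ii) n is odd and exactly one vertex of G has degree 2 while all other vertices have degree 1 (G is a disjoint union of (n−3)/2 single edges and one path on 3 vertices). -/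
set_option linter.unusedSectionVars false
set_option maxHeartbeats 1000000


open Matrix Polynomial

lemma charpoly_unitary_conj {n R : Type*} [Fintype n] [DecidableEq n] [CommRing R] [StarRing R]
    (U : Matrix.unitaryGroup n R) (A : Matrix n n R) :
    ((U : Matrix n n R) * A * star (U : Matrix n n R)).charpoly = A.charpoly := by
  have h1 : (U : Matrix n n R) * star (U : Matrix n n R) = 1 :=
    Matrix.mem_unitaryGroup_iff.mp U.2
  set mU := (C : R →+* R[X]).mapMatrix (U : Matrix n n R) with hmU
  set msU := (C : R →+* R[X]).mapMatrix (star (U : Matrix n n R)) with hmsU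
  have hUs : mU * msU = 1 := by
    rw [hmU, hmsU, ← _root_.map_mul, h1, _root_.map_one]
  have hch : charmatrix ((U : Matrix n n R) * A * star (U : Matrix n n R)) =
      mU * charmatrix A * msU := by
    rw [charmatrix, charmatrix, _root_.map_mul, _root_.map_mul]
    rw [mul_sub, sub_mul]
    congr 1
    · -- mU * scalar X * msU = scalar X
      have hc : mU * (Matrix.scalar n (X : R[X])) = (Matrix.scalar n (X : R[X])) * mU :=
        (Matrix.scalar_commute (X : R[X]) (fun r => mul_comm _ _) mU).symm
      rw [hc, mul_assoc, hUs, mul_one]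
  rw [Matrix.charpoly, Matrix.charpoly, hch, Matrix.det_mul, Matrix.det_mul]
  have : mU.det * msU.det = 1 := by
    rw [← Matrix.det_mul, hUs, Matrix.det_one]
  calc mU.det * (charmatrix A).det * msU.det
      = (charmatrix A).det * (mU.det * msU.det) := by ring
    _ = (charmatrix A).det := by rw [this, mul_one]

lemma charpoly_diagonal {n R : Type*} [Fintype n] [DecidableEq n] [CommRing R]
    (d : n → R) : (Matrix.diagonal d).charpoly = ∏ i, (X - C (d i)) := by
  have h : charmatrix (Matrix.diagonal d) = Matrix.diagonal (fun i => X - C (d i)) := by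
    ext i j
    by_cases h : i = j
    · subst h; simp
    · simp [Matrix.charmatrix_apply_ne _ _ _ h, Matrix.diagonal_apply_ne _ h,
        Matrix.diagonal_apply_ne d h]
  rw [Matrix.charpoly, h, Matrix.det_diagonal]

lemma roots_prod_X_sub_C' {n R : Type*} [Fintype n] [CommRing R] [IsDomain R]
    (d : n → R) : (∏ i, (X - C (d i))).roots = Finset.univ.val.map d := by
  have : (∏ i, (X - C (d i))) = ((Finset.univ.val.map d).map fun a => X - C a).prod := by
    rw [Multiset.map_map]
    rfl
  rw [this, Polynomial.roots_multiset_prod_X_sub_C]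

lemma skew_spectral_s7 {V : Type*} [Fintype V] [DecidableEq V] (M : Matrix V V ℝ)
    (hM : Mᵀ = -M) :
    ∃ μ : V → ℝ,
      energy M = ∑ i, |μ i| ∧
      (∑ i, (μ i)^2) = ∑ v, ∑ u, (M v u)^2 ∧
      (M * M * M = -M → ∀ i, μ i ^ 3 = μ i) ∧
      (Odd (Fintype.card V) → ∃ j, μ j = 0) := by
  classical
  have hskew : ∀ v w, M w v = - M v w := by
    intro v w
    have h := congrFun (congrFun hM w) v
    simp only [Matrix.transpose_apply, Matrix.neg_apply] at h
    linarith
  set Mc : Matrix V V ℂ := M.map (fun x : ℝ => (x : ℂ)) with hMcdef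
  have hMcskew : ∀ v w, Mc w v = - Mc v w := by
    intro v w
    simp [hMcdef, Matrix.map_apply, hskew v w]
  set H : Matrix V V ℂ := Complex.I • Mc with hHdef
  have hH : H.IsHermitian := by
    unfold Matrix.IsHermitian
    ext v w
    rw [Matrix.conjTranspose_apply, hHdef, Matrix.smul_apply, Matrix.smul_apply]
    rw [hMcskew v w]
    simp only [hMcdef, Matrix.map_apply]
    simp [Complex.conj_ofReal]
  set μ : V → ℝ := hH.eigenvalues with hμdef
  set U : Matrix V V ℂ := (hH.eigenvectorUnitary : Matrix V V ℂ) with hUdef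
  have hUsU : U * star U = 1 := Matrix.mem_unitaryGroup_iff.mp hH.eigenvectorUnitary.2
  have hsUU : star U * U = 1 := Matrix.mem_unitaryGroup_iff'.mp hH.eigenvectorUnitary.2
  have hMcH : Mc = (-Complex.I) • H := by
    rw [hHdef, smul_smul]
    simp [Complex.I_mul_I]
  have hspec : H = U * Matrix.diagonal (RCLike.ofReal ∘ μ) * star U := hH.spectral_theorem
  have hsd : (-Complex.I) • Matrix.diagonal (RCLike.ofReal ∘ μ) =
      Matrix.diagonal (fun i => -Complex.I * (μ i : ℂ)) := by
    ext i j
    by_cases h : i = j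
    · subst h; simp
    · simp [Matrix.diagonal_apply_ne _ h]
  have hMcU : Mc = U * Matrix.diagonal (fun i => -Complex.I * (μ i : ℂ)) * star U := by
    rw [hMcH, hspec, ← hsd]
    simp only [Matrix.mul_smul, Matrix.smul_mul]
  -- energy
  have hcp : Mc.charpoly = ∏ i, (X - C (-Complex.I * (μ i : ℂ))) := by
    rw [hMcU, charpoly_unitary_conj hH.eigenvectorUnitary, _root_.charpoly_diagonal]
  have hroots : Mc.charpoly.roots = Finset.univ.val.map (fun i => -Complex.I * (μ i : ℂ)) := by
    rw [hcp, roots_prod_X_sub_C']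
  have hE : energy M = ∑ i, |μ i| := by
    unfold energy spec
    rw [← hMcdef, hroots, Multiset.map_map]
    rw [show ((Finset.univ.val.map ((fun z => ‖z‖) ∘ fun i => -Complex.I * (μ i : ℂ)))).sum
      = ∑ i, ‖-Complex.I * (μ i : ℂ)‖ from rfl]
    refine Finset.sum_congr rfl fun i _ => ?_
    simp
  -- sum of squares
  have htr1 : Matrix.trace (Mc * Mc) = ∑ i, (-Complex.I * (μ i : ℂ))^2 := by
    rw [hMcU]
    have hassoc : (U * Matrix.diagonal (fun i => -Complex.I * (μ i : ℂ)) * star U) *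
        (U * Matrix.diagonal (fun i => -Complex.I * (μ i : ℂ)) * star U) =
        U * (Matrix.diagonal (fun i => -Complex.I * (μ i : ℂ)) *
          Matrix.diagonal (fun i => -Complex.I * (μ i : ℂ))) * star U := by
      calc (U * Matrix.diagonal (fun i => -Complex.I * (μ i : ℂ)) * star U) *
        (U * Matrix.diagonal (fun i => -Complex.I * (μ i : ℂ)) * star U)
          = U * Matrix.diagonal (fun i => -Complex.I * (μ i : ℂ)) * ((star U * U) *
            Matrix.diagonal (fun i => -Complex.I * (μ i : ℂ))) * star U := by
            simp only [Matrix.mul_assoc]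
        _ = _ := by rw [hsUU, one_mul]; simp only [Matrix.mul_assoc]
    rw [hassoc, Matrix.trace_mul_cycle, ← Matrix.mul_assoc, hsUU, one_mul,
      Matrix.diagonal_mul_diagonal, Matrix.trace_diagonal]
    refine Finset.sum_congr rfl fun i _ => ?_
    ring
  have htr2 : Matrix.trace (Mc * Mc) = ((-(∑ v, ∑ u, (M v u)^2) : ℝ) : ℂ) := by
    simp only [Matrix.trace, Matrix.diag, Matrix.mul_apply, hMcdef, Matrix.map_apply]
    push_cast
    rw [← Finset.sum_neg_distrib]
    refine Finset.sum_congr rfl fun v _ => ?_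
    rw [← Finset.sum_neg_distrib]
    refine Finset.sum_congr rfl fun u _ => ?_
    rw [hskew u v]
    push_cast
    ring
  have hsq : (∑ i, (μ i)^2) = ∑ v, ∑ u, (M v u)^2 := by
    have h1 : ∑ i, (-Complex.I * (μ i : ℂ))^2 = ((-(∑ i, (μ i)^2) : ℝ) : ℂ) := by
      push_cast
      rw [← Finset.sum_neg_distrib]
      refine Finset.sum_congr rfl fun i _ => ?_
      rw [mul_pow, neg_pow, Complex.I_sq]
      ring
    have := htr1.symm.trans htr2
    rw [h1] at this
    have := Complex.ofReal_inj.mp this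
    linarith
  refine ⟨μ, hE, hsq, ?_, ?_⟩
  · -- cube
    intro h3 i
    have h3c : Mc * Mc * Mc = -Mc := by
      have hmap : Mc * Mc * Mc = (M * M * M).map (fun x : ℝ => (x : ℂ)) := by
        calc Mc * Mc * Mc
            = (M.map ⇑Complex.ofRealHom) * (M.map ⇑Complex.ofRealHom) *
              (M.map ⇑Complex.ofRealHom) := rfl
          _ = (M * M * M).map ⇑Complex.ofRealHom := by
              rw [_root_.Matrix.map_mul, _root_.Matrix.map_mul]
          _ = (M * M * M).map (fun x : ℝ => (x : ℂ)) := rfl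
      rw [hmap, h3]
      ext v w
      simp [hMcdef, Matrix.map_apply]
    have hH3 : H * H * H = H := by
      have : H * H * H = (Complex.I * (Complex.I * Complex.I)) • (Mc * Mc * Mc) := by
        simp only [hHdef, Matrix.smul_mul, Matrix.mul_smul, smul_smul]
      rw [this, h3c]
      have hIII : Complex.I * (Complex.I * Complex.I) = -Complex.I := by
        simp [Complex.I_mul_I]
      rw [hIII, hHdef, smul_neg, neg_smul, neg_neg]
    have hvec := hH.mulVec_eigenvectorBasis i
    have h3v : (H * H * H) *ᵥ ⇑(hH.eigenvectorBasis i) =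
        ((μ i)^3 : ℝ) • ⇑(hH.eigenvectorBasis i) := by
      rw [← Matrix.mulVec_mulVec, ← Matrix.mulVec_mulVec, hvec, Matrix.mulVec_smul, hvec,
        Matrix.mulVec_smul, Matrix.mulVec_smul, hvec]
      rw [smul_smul, smul_smul]
      congr 1
      ring
    rw [hH3, hvec] at h3v
    obtain ⟨u, hu⟩ : ∃ u, (⇑(hH.eigenvectorBasis i) : V → ℂ) u ≠ 0 := by
      by_contra h
      push_neg at h
      apply hH.eigenvectorBasis.orthonormal.ne_zero i
      ext u
      exact h u
    have hcf := congrFun h3v u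
    simp only [Pi.smul_apply] at hcf
    have h0 : ((μ i : ℝ) - (μ i)^3 : ℝ) • (⇑(hH.eigenvectorBasis i) : V → ℂ) u = 0 := by
      rw [sub_smul, hcf, sub_self]
    rcases smul_eq_zero.mp h0 with h | h
    · have : (μ i) - (μ i)^3 = 0 := h
      linarith
    · exact absurd h hu
  · -- odd
    intro hodd
    have hdet : M.det = 0 := by
      have h1 : M.det = (-M).det := by conv_lhs => rw [← Matrix.det_transpose, hM]
      rw [Matrix.det_neg, Odd.neg_one_pow hodd, neg_one_mul] at h1
      linarith
    have hdetC : Mc.det = 0 := by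
      rw [hMcdef, show (fun x : ℝ => (x : ℂ)) = ⇑(Complex.ofRealHom) from rfl,
        ← RingHom.mapMatrix_apply, ← RingHom.map_det, hdet]
      simp
    have hdetH : H.det = 0 := by
      rw [hHdef, Matrix.det_smul, hdetC, mul_zero]
    rw [hH.det_eq_prod_eigenvalues] at hdetH
    obtain ⟨j, _, hj⟩ := Finset.prod_eq_zero_iff.mp hdetH
    exact ⟨j, by rw [hμdef]; exact RCLike.ofReal_eq_zero.mp hj⟩

lemma abs_eq_sq_of_cube_eq_self {x : ℝ} (h : x^3 = x) : |x| = x^2 := by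
  have hf : x * (x - 1) * (x + 1) = 0 := by linear_combination h
  rcases mul_eq_zero.mp hf with hf | hf
  · rcases mul_eq_zero.mp hf with hf | hf
    · rw [hf]; simp
    · have : x = 1 := by linarith
      rw [this]; norm_num
  · have : x = -1 := by linarith
    rw [this]; norm_num

section Graph
variable {V : Type*} [Fintype V] [DecidableEq V] (G : SimpleGraph V) [DecidableRel G.Adj]
  (σ : V → V → ℝ)

lemma skewRandic_transpose (hσ : IsOrientation G σ) :
    (skewRandicMatrix G σ)ᵀ = -(skewRandicMatrix G σ) := by
  obtain ⟨ha, -, -⟩ := hσ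
  ext v w
  simp only [Matrix.transpose_apply, Matrix.neg_apply, skewRandicMatrix]
  have h := ha w v
  rw [mul_comm ((G.degree w : ℝ)) ((G.degree v : ℝ))] at *
  rw [show σ w v = -σ v w by linarith]
  ring

lemma skewRandic_zero (hσ : IsOrientation G σ) {v w : V} (h : ¬ G.Adj v w) :
    skewRandicMatrix G σ v w = 0 := by
  rw [skewRandicMatrix, hσ.2.2 v w h, zero_div]

lemma skewRandic_sq (hσ : IsOrientation G σ) {v w : V} (h : G.Adj v w) :
    (skewRandicMatrix G σ v w)^2 = 1 / ((G.degree v : ℝ) * (G.degree w : ℝ)) := by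
  have hv : 0 < G.degree v := by
    rw [SimpleGraph.degree_pos_iff_exists_adj]; exact ⟨w, h⟩
  have hw : 0 < G.degree w := by
    rw [SimpleGraph.degree_pos_iff_exists_adj]; exact ⟨v, h.symm⟩
  have hσ2 : (σ v w)^2 = 1 := by
    rcases hσ.2.1 v w h with h' | h' <;> rw [h'] <;> norm_num
  rw [skewRandicMatrix, div_pow, hσ2, Real.sq_sqrt (by positivity)]

lemma skewRandic_mul_self (hσ : IsOrientation G σ) {v w : V} (h : G.Adj v w) :
    skewRandicMatrix G σ v w * skewRandicMatrix G σ w v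
      = -(1 / ((G.degree v : ℝ) * (G.degree w : ℝ))) := by
  have hs := congrFun (congrFun (skewRandic_transpose G σ hσ) v) w
  simp only [Matrix.transpose_apply, Matrix.neg_apply] at hs
  rw [hs, ← skewRandic_sq G σ hσ h]
  ring

lemma skewRandic_sq_ite (hσ : IsOrientation G σ) (v w : V) :
    (skewRandicMatrix G σ v w)^2
      = if G.Adj v w then 1 / ((G.degree v : ℝ) * (G.degree w : ℝ)) else 0 := by
  by_cases h : G.Adj v w
  · rw [if_pos h, skewRandic_sq G σ hσ h]
  · rw [if_neg h, skewRandic_zero G σ hσ h]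
    ring

/-- The cube identity for graphs where all vertices except possibly `c` have degree one. -/
lemma skewRandic_cube (hσ : IsOrientation G σ) (c : V) (hc1 : 1 ≤ G.degree c)
    (hc : ∀ v, v ≠ c → G.degree v = 1) :
    skewRandicMatrix G σ * skewRandicMatrix G σ * skewRandicMatrix G σ
      = -(skewRandicMatrix G σ) := by
  set M := skewRandicMatrix G σ with hMdef
  have hM0 : ∀ {v w}, ¬ G.Adj v w → M v w = 0 := fun {v w} h => skewRandic_zero G σ hσ h
  have hMmul : ∀ {v w}, G.Adj v w → M v w * M w v
      = -(1 / ((G.degree v : ℝ) * (G.degree w : ℝ))) :=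
    fun {v w} h => skewRandic_mul_self G σ hσ h
  have hrow : ∀ (v : V) (f : V → ℝ), ∑ u, M v u * f u = ∑ u ∈ G.neighborFinset v, M v u * f u := by
    intro v f
    symm
    apply Finset.sum_subset (Finset.subset_univ _)
    intro u _ hu
    rw [hM0 (by simpa [SimpleGraph.mem_neighborFinset] using hu), zero_mul]
  have huniq : ∀ v, v ≠ c → ∃ t, G.neighborFinset v = {t} := by
    intro v hv
    exact Finset.card_eq_one.mp (by rw [SimpleGraph.card_neighborFinset_eq_degree, hc v hv])
  have hnbr_ne : ∀ u, u ∈ G.neighborFinset c → u ≠ c := by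
    intro u hu heq
    have hadj := (G.mem_neighborFinset _ _).mp hu
    rw [heq] at hadj
    exact G.irrefl hadj
  have hnbr_back : ∀ u, u ∈ G.neighborFinset c → G.neighborFinset u = {c} := by
    intro u hu
    obtain ⟨t, ht⟩ := huniq u (hnbr_ne u hu)
    have : c ∈ G.neighborFinset u := by
      rw [SimpleGraph.mem_neighborFinset]
      exact ((G.mem_neighborFinset _ _).mp hu).symm
    rw [ht] at this ⊢
    rw [Finset.mem_singleton] at this
    rw [this]
  have hdeg1 : ∀ u, u ∈ G.neighborFinset c → G.degree u = 1 := fun u hu => hc u (hnbr_ne u hu)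
  -- the central sum
  have hcsum : ∑ u ∈ G.neighborFinset c, M c u * M u c = -1 := by
    have : ∀ u ∈ G.neighborFinset c, M c u * M u c = -(1 / (G.degree c : ℝ)) := by
      intro u hu
      rw [hMmul ((G.mem_neighborFinset _ _).mp hu), hdeg1 u hu]
      norm_num
    rw [Finset.sum_congr rfl this, Finset.sum_const, SimpleGraph.card_neighborFinset_eq_degree,
      nsmul_eq_mul]
    have : (G.degree c : ℝ) ≠ 0 := by positivity
    field_simp
  have hMM : ∀ v w, (M * M) v w = ∑ u ∈ G.neighborFinset v, M v u * M u w := by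
    intro v w
    rw [Matrix.mul_apply]
    exact hrow v (fun u => M u w)
  -- row c of M*M
  have hMMc : ∀ w, (M * M) c w = if w = c then -1 else 0 := by
    intro w
    rw [hMM]
    by_cases hw : w = c
    · rw [if_pos hw, hw, hcsum]
    · rw [if_neg hw]
      apply Finset.sum_eq_zero
      intro u hu
      have : M u w = 0 := by
        apply hM0
        intro hadj
        have : w ∈ G.neighborFinset u := (G.mem_neighborFinset _ _).mpr hadj
        rw [hnbr_back u hu, Finset.mem_singleton] at this
        exact hw this
      rw [this, mul_zero]
  have hassoc : M * M * M = M * (M * M) := by rw [Matrix.mul_assoc]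
  rw [hassoc]
  ext v w
  rw [Matrix.mul_apply, Matrix.neg_apply, hrow v (fun u => (M * M) u w)]
  by_cases hv : v = c
  · -- row c
    subst hv
    have : ∀ u ∈ G.neighborFinset v, M v u * (M * M) u w = (M v u * M u v) * M v w := by
      intro u hu
      rw [hMM u w, hnbr_back u hu, Finset.sum_singleton, mul_assoc]
    rw [Finset.sum_congr rfl this, ← Finset.sum_mul, hcsum]
    ring
  · -- row v ≠ c
    obtain ⟨t, ht⟩ := huniq v hv
    have hvt : G.Adj v t := by
      have : t ∈ G.neighborFinset v := by rw [ht]; exact Finset.mem_singleton_self t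
      exact (G.mem_neighborFinset _ _).mp this
    rw [ht, Finset.sum_singleton]
    by_cases htc : t = c
    · subst htc
      rw [hMMc w]
      by_cases hw : w = t
      · rw [if_pos hw, hw]
        ring
      · rw [if_neg hw]
        have : M v w = 0 := by
          apply hM0
          intro hadj
          have : w ∈ G.neighborFinset v := (G.mem_neighborFinset _ _).mpr hadj
          rw [ht, Finset.mem_singleton] at this
          exact hw this
        rw [this, mul_zero, neg_zero]
    · -- t ≠ c, both degree 1
      obtain ⟨s, hs⟩ := huniq t htc
      have hsv : s = v := by
        have : v ∈ G.neighborFinset t := (G.mem_neighborFinset _ _).mpr hvt.symm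
        rw [hs, Finset.mem_singleton] at this
        exact this.symm
      rw [hMM t w, hs, hsv, Finset.sum_singleton, ← mul_assoc]
      rw [hMmul hvt, hc v hv, hc t htc]
      norm_num
end Graph

section Sums
variable {V : Type*} [Fintype V] [DecidableEq V] (G : SimpleGraph V) [DecidableRel G.Adj]

/-- the "deficiency" sum -/
noncomputable def Dsum : ℝ :=
  ∑ v, ∑ u, if G.Adj v u then (1/(G.degree v : ℝ)) * (1 - 1/(G.degree u : ℝ)) else 0

noncomputable def Psum : ℝ :=
  ∑ v, ∑ u, if G.Adj v u then 1/((G.degree v : ℝ) * (G.degree u : ℝ)) else 0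

lemma degree_cast_pos {v : V} (h : 1 ≤ G.degree v) : (0:ℝ) < (G.degree v : ℝ) := by
  exact_mod_cast h

lemma Dsum_nonneg (hdeg : ∀ v : V, 1 ≤ G.degree v) : 0 ≤ Dsum G := by
  apply Finset.sum_nonneg
  intro v _
  apply Finset.sum_nonneg
  intro u _
  by_cases h : G.Adj v u
  · rw [if_pos h]
    have hu := degree_cast_pos G (hdeg u)
    have hv := degree_cast_pos G (hdeg v)
    have h1 : 1/(G.degree u : ℝ) ≤ 1 := by
      rw [div_le_one hu]
      exact_mod_cast hdeg u
    have h2 : (0:ℝ) ≤ 1/(G.degree v : ℝ) := by positivity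
    nlinarith
  · simp [h]

lemma Psum_eq (hdeg : ∀ v : V, 1 ≤ G.degree v) :
    Psum G = (Fintype.card V : ℝ) - Dsum G := by
  have key : ∀ v : V, (∑ u, if G.Adj v u then 1/((G.degree v : ℝ) * (G.degree u : ℝ)) else 0)
      = 1 - ∑ u, (if G.Adj v u then (1/(G.degree v : ℝ)) * (1 - 1/(G.degree u : ℝ)) else 0) := by
    intro v
    have hvne : (G.degree v : ℝ) ≠ 0 := ne_of_gt (degree_cast_pos G (hdeg v))
    have h1 : (∑ u, if G.Adj v u then (1/(G.degree v : ℝ)) else 0) = 1 := by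
      rw [← Finset.sum_filter]
      have hfil : Finset.univ.filter (G.Adj v) = G.neighborFinset v := by
        ext u
        simp [SimpleGraph.mem_neighborFinset]
      rw [hfil, Finset.sum_const, SimpleGraph.card_neighborFinset_eq_degree, nsmul_eq_mul]
      field_simp
    calc (∑ u, if G.Adj v u then 1/((G.degree v : ℝ) * (G.degree u : ℝ)) else 0)
        = ∑ u, ((if G.Adj v u then (1/(G.degree v : ℝ)) else 0)
            - (if G.Adj v u then (1/(G.degree v : ℝ)) * (1 - 1/(G.degree u : ℝ)) else 0)) := by
          refine Finset.sum_congr rfl fun u _ => ?_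
          by_cases h : G.Adj v u
          · rw [if_pos h, if_pos h, if_pos h, ← one_div_mul_one_div]
            ring
          · rw [if_neg h, if_neg h, if_neg h, sub_zero]
      _ = _ := by rw [Finset.sum_sub_distrib, h1]
  rw [Psum, Dsum, Finset.sum_congr rfl (fun v _ => key v), Finset.sum_sub_distrib,
    Finset.sum_const, Finset.card_univ, nsmul_eq_mul, mul_one]

lemma Dsum_eq (c : V) (hc1 : 1 ≤ G.degree c) (hc : ∀ v, v ≠ c → G.degree v = 1) :
    Dsum G = (G.degree c : ℝ) - 1 := by
  have key : ∀ v : V,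
      (∑ u, if G.Adj v u then (1/(G.degree v : ℝ)) * (1 - 1/(G.degree u : ℝ)) else 0)
      = if G.Adj v c then (1 - 1/(G.degree c : ℝ)) else 0 := by
    intro v
    rw [Finset.sum_eq_single c]
    · by_cases h : G.Adj v c
      · rw [if_pos h, if_pos h, hc v (G.ne_of_adj h), Nat.cast_one]
        norm_num
      · rw [if_neg h, if_neg h]
    · intro u _ hu
      by_cases h : G.Adj v u
      · rw [if_pos h, hc u hu, Nat.cast_one]
        norm_num
      · rw [if_neg h]
    · intro h
      exact absurd (Finset.mem_univ c) h
  rw [Dsum, Finset.sum_congr rfl (fun v _ => key v)]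
  rw [← Finset.sum_filter]
  have hfil : Finset.univ.filter (fun v => G.Adj v c) = G.neighborFinset c := by
    ext v
    simp [SimpleGraph.mem_neighborFinset, SimpleGraph.adj_comm]
  rw [hfil, Finset.sum_const, SimpleGraph.card_neighborFinset_eq_degree, nsmul_eq_mul]
  have : (G.degree c : ℝ) ≠ 0 := by positivity
  field_simp

lemma deg_eq_one_of_Dsum_eq_zero (hdeg : ∀ v : V, 1 ≤ G.degree v) (h : Dsum G = 0) :
    ∀ v : V, G.degree v = 1 := by
  intro u
  obtain ⟨v, hv⟩ : ∃ v, G.Adj u v := by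
    rw [← SimpleGraph.degree_pos_iff_exists_adj]
    exact hdeg u
  have hterm : (if G.Adj v u then (1/(G.degree v : ℝ)) * (1 - 1/(G.degree u : ℝ)) else 0) = 0 := by
    have h1 := (Finset.sum_eq_zero_iff_of_nonneg ?nn).mp h v (Finset.mem_univ v)
    case nn =>
      intro v _
      apply Finset.sum_nonneg
      intro u _
      by_cases hadj : G.Adj v u
      · rw [if_pos hadj]
        have h1 : 1/(G.degree u : ℝ) ≤ 1 := by
          rw [div_le_one (degree_cast_pos G (hdeg u))]
          exact_mod_cast hdeg u
        have := degree_cast_pos G (hdeg v)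
        have h2 : (0:ℝ) ≤ 1/(G.degree v:ℝ) := by positivity
        nlinarith
      · rw [if_neg hadj]
    refine (Finset.sum_eq_zero_iff_of_nonneg ?_).mp h1 u (Finset.mem_univ u)
    intro u _
    by_cases hadj : G.Adj v u
    · rw [if_pos hadj]
      have h1 : 1/(G.degree u : ℝ) ≤ 1 := by
        rw [div_le_one (degree_cast_pos G (hdeg u))]
        exact_mod_cast hdeg u
      have := degree_cast_pos G (hdeg v)
      have h2 : (0:ℝ) ≤ 1/(G.degree v:ℝ) := by positivity
      nlinarith
    · rw [if_neg hadj]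
  rw [if_pos hv.symm] at hterm
  rcases mul_eq_zero.mp hterm with h' | h'
  · exact absurd h' (ne_of_gt (div_pos one_pos (degree_cast_pos G (hdeg v))))
  · have : (G.degree u : ℝ) = 1 := by
      have hpos := degree_cast_pos G (hdeg u)
      field_simp at h'
      linarith
    exact_mod_cast this

lemma Dsum_gt_one (hdeg : ∀ v : V, 1 ≤ G.degree v) {c₁ c₂ : V} (hne : c₁ ≠ c₂)
    (h1 : 2 ≤ G.degree c₁) (h2 : 2 ≤ G.degree c₂) : 1 < Dsum G := by
  classical
  set F : V × V → ℝ := fun p =>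
    if G.Adj p.1 p.2 then (1/(G.degree p.1 : ℝ)) * (1 - 1/(G.degree p.2 : ℝ)) else 0 with hF
  have hdpos : ∀ v : V, (0:ℝ) < (G.degree v : ℝ) := by
    intro v; exact_mod_cast hdeg v
  have hFnn : ∀ p : V × V, 0 ≤ F p := by
    intro p
    rw [hF]
    dsimp only
    by_cases h : G.Adj p.1 p.2
    · rw [if_pos h]
      have hu := hdpos p.2
      have h1' : 1/(G.degree p.2 : ℝ) ≤ 1 := by
        rw [div_le_one hu]; exact_mod_cast hdeg p.2
      have h2' : (0:ℝ) ≤ 1/(G.degree p.1 : ℝ) := le_of_lt (div_pos one_pos (hdpos p.1))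
      nlinarith
    · rw [if_neg h]
  have hD : Dsum G = ∑ p : V × V, F p := by
    rw [Dsum, Fintype.sum_prod_type]
  -- pick v₀ adjacent to c₂ with v₀ ≠ c₁
  obtain ⟨v₀, hv₀mem, hv₀ne⟩ : ∃ v₀, v₀ ∈ G.neighborFinset c₂ ∧ v₀ ≠ c₁ := by
    have hcard : 1 < (G.neighborFinset c₂).card := by
      rw [SimpleGraph.card_neighborFinset_eq_degree]; omega
    obtain ⟨a, ha, b, hb, hab⟩ := Finset.one_lt_card.mp hcard
    rcases eq_or_ne a c₁ with h | h
    · exact ⟨b, hb, by rw [← h]; exact hab.symm⟩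
    · exact ⟨a, ha, h⟩
  have hadj₀ : G.Adj v₀ c₂ := ((G.mem_neighborFinset _ _).mp hv₀mem).symm
  set T₁ : Finset (V × V) := (G.neighborFinset c₁).image (fun v => (v, c₁)) with hT₁
  set T₂ : Finset (V × V) := (G.neighborFinset c₁).image (fun v => (c₁, v)) with hT₂
  have hnbrne : ∀ v, v ∈ G.neighborFinset c₁ → v ≠ c₁ := by
    intro v hv heq
    have hadj := (G.mem_neighborFinset _ _).mp hv
    rw [heq] at hadj
    exact G.irrefl hadj
  have hdisj : Disjoint T₁ T₂ := by
    rw [Finset.disjoint_left]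
    intro p hp1 hp2
    rw [hT₁, Finset.mem_image] at hp1
    rw [hT₂, Finset.mem_image] at hp2
    obtain ⟨v, hv, rfl⟩ := hp1
    obtain ⟨u, hu, huv⟩ := hp2
    have : v = c₁ := by
      have := congrArg Prod.fst huv
      simpa using this.symm
    exact hnbrne v hv this
  have hp₀ : (v₀, c₂) ∉ T₁ ∪ T₂ := by
    intro hmem
    rcases Finset.mem_union.mp hmem with h | h
    · rw [hT₁, Finset.mem_image] at h
      obtain ⟨v, -, hv⟩ := h
      exact hne (by simpa using congrArg Prod.snd hv)
    · rw [hT₂, Finset.mem_image] at h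
      obtain ⟨v, -, hv⟩ := h
      exact hv₀ne (by simpa using (congrArg Prod.fst hv).symm)
  have hsub : ((T₁ ∪ T₂) ∪ {(v₀, c₂)}) ⊆ Finset.univ := Finset.subset_univ _
  have hle : ∑ p ∈ (T₁ ∪ T₂) ∪ {(v₀, c₂)}, F p ≤ ∑ p : V × V, F p :=
    Finset.sum_le_sum_of_subset_of_nonneg hsub (fun p _ _ => hFnn p)
  have hsum₁ : ∑ p ∈ T₁, F p = ∑ v ∈ G.neighborFinset c₁, F (v, c₁) := by
    rw [hT₁]
    apply Finset.sum_image
    intro a _ b _ hab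
    exact (Prod.mk.injEq _ _ _ _).mp hab |>.1
  have hsum₂ : ∑ p ∈ T₂, F p = ∑ v ∈ G.neighborFinset c₁, F (c₁, v) := by
    rw [hT₂]
    apply Finset.sum_image
    intro a _ b _ hab
    exact (Prod.mk.injEq _ _ _ _).mp hab |>.2
  have hkey : (1:ℝ) ≤ ∑ p ∈ T₁ ∪ T₂, F p := by
    rw [Finset.sum_union hdisj, hsum₁, hsum₂, ← Finset.sum_add_distrib]
    have hper : ∀ v ∈ G.neighborFinset c₁, 1/(G.degree c₁ : ℝ) ≤ F (v, c₁) + F (c₁, v) := by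
      intro v hv
      have hadj : G.Adj c₁ v := (G.mem_neighborFinset _ _).mp hv
      have hx := hdpos v
      have hy := hdpos c₁
      have h2y : (2:ℝ) ≤ (G.degree c₁ : ℝ) := by exact_mod_cast h1
      rw [hF]
      dsimp only
      rw [if_pos hadj.symm, if_pos hadj]
      have he : (1/(G.degree v : ℝ))*(1-1/(G.degree c₁:ℝ))
          + (1/(G.degree c₁:ℝ))*(1-1/(G.degree v:ℝ)) - 1/(G.degree c₁:ℝ)
          = (1/(G.degree v:ℝ))*(1 - 2/(G.degree c₁:ℝ)) := by
        field_simp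
        ring
      have hge : (0:ℝ) ≤ (1/(G.degree v:ℝ))*(1 - 2/(G.degree c₁:ℝ)) := by
        apply mul_nonneg (le_of_lt (div_pos one_pos hx))
        rw [sub_nonneg, div_le_one hy]
        exact h2y
      linarith
    calc (1:ℝ) = ∑ _v ∈ G.neighborFinset c₁, 1/(G.degree c₁ : ℝ) := by
          rw [Finset.sum_const, SimpleGraph.card_neighborFinset_eq_degree, nsmul_eq_mul]
          field_simp
      _ ≤ _ := Finset.sum_le_sum hper
  have hpos₀ : 0 < F (v₀, c₂) := by
    rw [hF]
    dsimp only
    rw [if_pos hadj₀]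
    apply mul_pos (div_pos one_pos (hdpos v₀))
    rw [sub_pos, div_lt_one (hdpos c₂)]
    have : (2:ℝ) ≤ (G.degree c₂ : ℝ) := by exact_mod_cast h2
    linarith
  have hsplit : ∑ p ∈ (T₁ ∪ T₂) ∪ {(v₀, c₂)}, F p
      = ∑ p ∈ T₁ ∪ T₂, F p + F (v₀, c₂) := by
    rw [Finset.sum_union (Finset.disjoint_singleton_right.mpr hp₀), Finset.sum_singleton]
  rw [hD]
  calc (1:ℝ) < ∑ p ∈ T₁ ∪ T₂, F p + F (v₀, c₂) := by linarith
    _ = ∑ p ∈ (T₁ ∪ T₂) ∪ {(v₀, c₂)}, F p := hsplit.symm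
    _ ≤ ∑ p : V × V, F p := hle

end Sums

theorem skewRandic_energy_upper_bound_equality
    {V : Type*} [Fintype V] [DecidableEq V] (G : SimpleGraph V) [DecidableRel G.Adj]
    (σ : V → V → ℝ) (hσ : IsOrientation G σ) (hn : 2 ≤ Fintype.card V)
    (hdeg : ∀ v : V, 1 ≤ G.degree v) :
    energy (skewRandicMatrix G σ) = 2 * (Fintype.card V / 2 : ℕ) ↔
      (Even (Fintype.card V) ∧ ∀ v : V, G.degree v = 1) ∨
      (Odd (Fintype.card V) ∧
        ∃ c : V, G.degree c = 2 ∧ ∀ v : V, v ≠ c → G.degree v = 1) := by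
  classical
  obtain ⟨μ, hE, hsq, hcube, hzero⟩ :=
    skew_spectral_s7 (skewRandicMatrix G σ) (skewRandic_transpose G σ hσ)
  have hnR : (2:ℝ) ≤ (Fintype.card V : ℝ) := by exact_mod_cast hn
  have hPsum : ∑ v, ∑ u, (skewRandicMatrix G σ v u)^2 = Psum G := by
    rw [Psum]
    exact Finset.sum_congr rfl fun v _ => Finset.sum_congr rfl fun u _ =>
      skewRandic_sq_ite G σ hσ v u
  have hPD : Psum G = (Fintype.card V : ℝ) - Dsum G := Psum_eq G hdeg
  have hDnn : 0 ≤ Dsum G := Dsum_nonneg G hdeg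
  have hsqP : ∑ i, (μ i)^2 = (Fintype.card V : ℝ) - Dsum G := by
    rw [hsq, hPsum, hPD]
  constructor
  · intro hEn
    rcases Nat.even_or_odd (Fintype.card V) with hpar | hpar
    · -- even case
      left
      refine ⟨hpar, ?_⟩
      have hEn' : energy (skewRandicMatrix G σ) = (Fintype.card V : ℝ) := by
        rw [hEn]
        obtain ⟨k, hk⟩ := hpar
        rw [hk, show (k + k) / 2 = k from by omega]
        push_cast
        ring
      have h1 : (∑ i, |μ i|)^2 ≤ (Fintype.card V : ℝ) * ∑ i, |μ i|^2 := by
        have := sq_sum_le_card_mul_sum_sq (s := (Finset.univ : Finset V)) (f := fun i => |μ i|)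
        simpa [Finset.card_univ] using this
      have h2 : ∑ i, |μ i|^2 = (Fintype.card V : ℝ) - Dsum G := by
        rw [← hsqP]
        exact Finset.sum_congr rfl fun i _ => sq_abs (μ i)
      rw [← hE, hEn', h2] at h1
      have hD0 : Dsum G = 0 := le_antisymm (by nlinarith) hDnn
      exact deg_eq_one_of_Dsum_eq_zero G hdeg hD0
    · -- odd case
      right
      refine ⟨hpar, ?_⟩
      have hEn' : energy (skewRandicMatrix G σ) = (Fintype.card V : ℝ) - 1 := by
        rw [hEn]
        obtain ⟨k, hk⟩ := hpar
        rw [hk, show (2 * k + 1) / 2 = k from by omega]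
        push_cast
        ring
      obtain ⟨j₀, hj₀⟩ := hzero hpar
      have hErase : energy (skewRandicMatrix G σ) = ∑ i ∈ Finset.univ.erase j₀, |μ i| := by
        rw [hE, ← Finset.sum_erase_add Finset.univ _ (Finset.mem_univ j₀), hj₀, abs_zero,
          add_zero]
      have hcard : (((Finset.univ : Finset V).erase j₀).card : ℝ)
          = (Fintype.card V : ℝ) - 1 := by
        rw [Finset.card_erase_of_mem (Finset.mem_univ j₀), Finset.card_univ]
        have h1 : 1 ≤ Fintype.card V := by omega
        push_cast [h1]
        ring
      have h2 : ∑ i, |μ i|^2 = (Fintype.card V : ℝ) - Dsum G := by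
        rw [← hsqP]
        exact Finset.sum_congr rfl fun i _ => sq_abs (μ i)
      have h1 : ((Fintype.card V : ℝ) - 1)^2
          ≤ ((Fintype.card V : ℝ) - 1) * ((Fintype.card V : ℝ) - Dsum G) := by
        have hcs := sq_sum_le_card_mul_sum_sq (s := (Finset.univ : Finset V).erase j₀)
          (f := fun i => |μ i|)
        have hsub : ∑ i ∈ Finset.univ.erase j₀, |μ i|^2 ≤ ∑ i, |μ i|^2 :=
          Finset.sum_le_sum_of_subset_of_nonneg (Finset.subset_univ _)
            (fun i _ _ => sq_nonneg _)
        calc ((Fintype.card V : ℝ) - 1)^2 = (∑ i ∈ Finset.univ.erase j₀, |μ i|)^2 := by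
              rw [← hErase, hEn']
          _ ≤ (((Finset.univ : Finset V).erase j₀).card : ℝ)
              * ∑ i ∈ Finset.univ.erase j₀, |μ i|^2 := hcs
          _ ≤ ((Fintype.card V : ℝ) - 1) * ((Fintype.card V : ℝ) - Dsum G) := by
              rw [hcard]
              have h3 : ∑ i ∈ Finset.univ.erase j₀, |μ i|^2
                  ≤ (Fintype.card V : ℝ) - Dsum G := by
                rw [← h2]
                exact hsub
              have h4 : (0:ℝ) ≤ (Fintype.card V : ℝ) - 1 := by linarith
              exact mul_le_mul_of_nonneg_left h3 h4
      have hD1 : Dsum G ≤ 1 := by nlinarith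
      have hnotall : ¬ (∀ v : V, G.degree v = 1) := by
        intro hall
        have hhs := G.sum_degrees_eq_twice_card_edges
        have hsum1 : ∑ v : V, G.degree v = Fintype.card V := by simp [hall]
        rw [hsum1] at hhs
        exact (Nat.not_even_iff_odd.mpr hpar) ⟨G.edgeFinset.card, by omega⟩
      push_neg at hnotall
      obtain ⟨c, hcne⟩ := hnotall
      have hc2 : 2 ≤ G.degree c := by have := hdeg c; omega
      have hrest : ∀ v : V, v ≠ c → G.degree v = 1 := by
        intro v hv
        by_contra hv1
        have hv2 : 2 ≤ G.degree v := by have := hdeg v; omega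
        exact absurd (Dsum_gt_one G hdeg hv hv2 hc2) (not_lt.mpr hD1)
      have hDeq : Dsum G = (G.degree c : ℝ) - 1 := Dsum_eq G c (by omega) hrest
      have hle2 : (G.degree c : ℝ) ≤ 2 := by rw [hDeq] at hD1; linarith
      have hdc2 : G.degree c = 2 := by
        have h2' : G.degree c ≤ 2 := by exact_mod_cast hle2
        omega
      exact ⟨c, hdc2, hrest⟩
  · intro hstruct
    rcases hstruct with ⟨hpar, hall⟩ | ⟨hpar, c, hdc, hrest⟩
    · -- even structure
      have hne : Nonempty V := Fintype.card_pos_iff.mp (by omega)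
      obtain ⟨c⟩ := hne
      have hrest : ∀ v : V, v ≠ c → G.degree v = 1 := fun v _ => hall v
      have hc3 := skewRandic_cube G σ hσ c (hdeg c) hrest
      have hcube' := hcube hc3
      have hEn : energy (skewRandicMatrix G σ) = (Fintype.card V : ℝ) - Dsum G := by
        rw [hE, ← hsqP]
        exact Finset.sum_congr rfl fun i _ => abs_eq_sq_of_cube_eq_self (hcube' i)
      have hDeq : Dsum G = (G.degree c : ℝ) - 1 := Dsum_eq G c (hdeg c) hrest
      rw [hEn, hDeq, hall c]
      obtain ⟨k, hk⟩ := hpar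
      rw [hk, show (k + k) / 2 = k from by omega]
      push_cast
      ring
    · -- odd structure
      have hc3 := skewRandic_cube G σ hσ c (hdeg c) hrest
      have hcube' := hcube hc3
      have hEn : energy (skewRandicMatrix G σ) = (Fintype.card V : ℝ) - Dsum G := by
        rw [hE, ← hsqP]
        exact Finset.sum_congr rfl fun i _ => abs_eq_sq_of_cube_eq_self (hcube' i)
      have hDeq : Dsum G = (G.degree c : ℝ) - 1 := Dsum_eq G c (hdeg c) hrest
      rw [hEn, hDeq, hdc]
      obtain ⟨k, hk⟩ := hpar
      rw [hk, show (2 * k + 1) / 2 = k from by omega]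
      push_cast
      ring
end

section
/- Let n ≥ 3 be odd and let G be the star K_{1,n−1} on a finite vertex set V of size n: there is a vertex c adjacent to every other vertex, and these are the only edges of G. Then for every orientation σ of G, the skew Randić energy satisfies RE_s(G^σ) = 2. -/
open Matrix Polynomial

section AuxSkewRandic

variable {V : Type*} [Fintype V] [DecidableEq V]

omit [DecidableEq V] in
private lemma cr_mul (a b c' d : V → ℂ) :
    (replicateCol Unit a * replicateRow Unit b) * (replicateCol Unit c' * replicateRow Unit d)
      = (b ⬝ᵥ c') • (replicateCol Unit a * replicateRow Unit d) := by
  ext i j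
  simp [Matrix.mul_apply, Matrix.replicateCol_apply, Matrix.replicateRow_apply, dotProduct,
    Finset.mul_sum, Finset.sum_mul]
  exact Finset.sum_congr rfl fun x _ => by ring

omit [DecidableEq V] in
private lemma cr_apply (a b : V → ℂ) (i j : V) :
    (replicateCol Unit a * replicateRow Unit b) i j = a i * b j := by
  simp [Matrix.mul_apply, Matrix.replicateCol_apply, Matrix.replicateRow_apply]

private lemma eval_charpoly' (A : Matrix V V ℂ) (z : ℂ) :
    eval z A.charpoly = det (z • (1 : Matrix V V ℂ) - A) := by
  rw [Matrix.charpoly, ← coe_evalRingHom, RingHom.map_det]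
  congr 1
  ext i j
  by_cases h : i = j
  · subst h
    simp [charmatrix_apply_eq, Matrix.map_apply, Matrix.sub_apply, Matrix.one_apply]
  · simp [charmatrix_apply_ne _ _ _ h, Matrix.map_apply, Matrix.sub_apply,
      Matrix.one_apply_ne h, h]

end AuxSkewRandic

theorem skewRandic_energy_star_odd
    {V : Type*} [Fintype V] [DecidableEq V] (G : SimpleGraph V) [DecidableRel G.Adj]
    (hn : 3 ≤ Fintype.card V) (hodd : Odd (Fintype.card V)) (c : V)
    (hstar : ∀ v w : V, G.Adj v w ↔ ((v = c ∧ w ≠ c) ∨ (w = c ∧ v ≠ c)))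
    (σ : V → V → ℝ) (hσ : IsOrientation G σ) :
    energy (skewRandicMatrix G σ) = 2 := by
  obtain ⟨hskew, hpm, hzero⟩ := hσ
  set n := Fintype.card V with hn'
  have hn1 : (1:ℕ) ≤ n := by omega
  -- degrees
  have hadj : ∀ v, v ≠ c → G.Adj c v := fun v hv => (hstar c v).2 (Or.inl ⟨rfl, hv⟩)
  have hdegc : G.degree c = n - 1 := by
    have h : G.neighborFinset c = Finset.univ.erase c := by
      ext w
      simp only [SimpleGraph.mem_neighborFinset, hstar, Finset.mem_erase, Finset.mem_univ,
        and_true]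
      tauto
    rw [SimpleGraph.degree, h, Finset.card_erase_of_mem (Finset.mem_univ c), Finset.card_univ]
  have hdegv : ∀ v, v ≠ c → G.degree v = 1 := by
    intro v hv
    have h : G.neighborFinset v = {c} := by
      ext w
      simp only [SimpleGraph.mem_neighborFinset, hstar, Finset.mem_singleton]
      constructor
      · rintro (⟨rfl, _⟩ | ⟨rfl, _⟩) <;> tauto
      · rintro rfl; exact Or.inr ⟨rfl, hv⟩
    rw [SimpleGraph.degree, h, Finset.card_singleton]
  set s : ℝ := Real.sqrt ((n:ℝ) - 1) with hs'
  have hn3 : (3:ℝ) ≤ (n:ℝ) := by exact_mod_cast hn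
  have hs0 : 0 < s := Real.sqrt_pos.2 (by linarith)
  have hss : s * s = (n:ℝ) - 1 := Real.mul_self_sqrt (by linarith)
  have hcc : σ c c = 0 := hzero c c (G.irrefl)
  have hdiag : ∀ v, σ v v = 0 := by
    intro v; have := hskew v v; linarith
  set u : V → ℂ := fun v => ((σ c v : ℝ) : ℂ) / (s : ℂ) with hu'
  set e : V → ℂ := fun v => if v = c then 1 else 0 with he'
  have huc : u c = 0 := by simp [hu', hcc]
  set N : Matrix V V ℂ := (skewRandicMatrix G σ).map (fun x : ℝ => (x : ℂ)) with hN'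
  have hNapp : ∀ v w, N v w
      = ((σ v w : ℝ):ℂ) / ((Real.sqrt ((G.degree v : ℝ) * (G.degree w:ℝ)) :ℝ):ℂ) := by
    intro v w
    simp [hN', skewRandicMatrix, Matrix.map_apply]
  have hcastn : ((n - 1 : ℕ) : ℝ) = (n:ℝ) - 1 := by
    push_cast [hn1]; ring
  have hNdef : N = replicateCol Unit e * replicateRow Unit u - replicateCol Unit u * replicateRow Unit e := by
    ext v w
    rw [Matrix.sub_apply, cr_apply, cr_apply, hNapp]
    by_cases hv : v = c <;> by_cases hw : w = c
    · rw [hv, hw]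
      simp [hcc, huc, he']
    · rw [hv]
      rw [hdegc, hdegv w hw]
      simp only [he', hu', if_pos rfl, if_neg hw, one_mul, mul_zero, sub_zero]
      rw [hcastn]
      norm_num
      rw [← hs']
    · rw [hw]
      rw [hdegc, hdegv v hv]
      have hvc : σ v c = -σ c v := by have := hskew c v; linarith
      simp only [he', hu', if_pos rfl, if_neg hv, mul_one, zero_mul, zero_sub, zero_mul]
      rw [hcastn, hvc]
      push_cast
      rw [mul_comm ((1:ℝ)) _]
      norm_num
      rw [← hs', neg_div]
    · have hvw : σ v w = 0 := by
        by_cases hvw' : v = w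
        · subst hvw'; exact hdiag v
        · exact hzero v w (by rw [hstar]; tauto)
      simp [he', hv, hw, hvw]
  -- dot products
  have heu : e ⬝ᵥ u = 0 := by
    simp only [dotProduct, he', ite_mul, one_mul, zero_mul]
    rw [Finset.sum_ite_eq' Finset.univ c u]
    simp [huc]
  have hue : u ⬝ᵥ e = 0 := by
    simp only [dotProduct, he', mul_ite, mul_one, mul_zero]
    rw [Finset.sum_ite_eq' Finset.univ c u]
    simp [huc]
  have hee : e ⬝ᵥ e = 1 := by
    simp only [dotProduct, he', ite_mul, one_mul, zero_mul]
    rw [Finset.sum_ite_eq' Finset.univ c e]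
    simp [he']
  have hnn0 : (n - 1 : ℕ) ≠ 0 := by omega
  have hnc : ((n:ℂ) - 1) ≠ 0 := by
    intro h
    have h2 : (n:ℂ) = ((1:ℕ):ℂ) := by push_cast; linear_combination h
    have := Nat.cast_injective (R := ℂ) h2
    omega
  have huu : u ⬝ᵥ u = 1 := by
    have h1 : ∀ v, u v * u v = if v = c then 0 else ((n:ℂ) - 1)⁻¹ := by
      intro v
      by_cases hv : v = c
      · simp [hv, huc]
      · have h2 : σ c v * σ c v = 1 := by
          rcases hpm c v (hadj v hv) with h | h <;> rw [h] <;> norm_num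
        rw [if_neg hv, hu', div_mul_div_comm, ← Complex.ofReal_mul, ← Complex.ofReal_mul,
          h2, hss]
        rw [Complex.ofReal_one]
        rw [one_div]
        congr 1
        push_cast
        ring
    rw [dotProduct, Finset.sum_congr rfl fun v _ => h1 v, Finset.sum_ite,
      Finset.sum_const, Finset.sum_const]
    rw [Finset.filter_ne', Finset.card_erase_of_mem (Finset.mem_univ c), Finset.card_univ]
    simp only [smul_zero, zero_add, nsmul_eq_mul]
    rw [show ((n - 1 : ℕ) : ℂ) = (n:ℂ) - 1 by push_cast [hn1]; ring]
    exact mul_inv_cancel₀ hnc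
  have hNT : Nᵀ = -N := by
    ext v w
    rw [Matrix.transpose_apply, Matrix.neg_apply, hNapp, hNapp]
    have h2 : σ w v = -σ v w := by have := hskew v w; linarith
    rw [h2, mul_comm ((G.degree w : ℝ)) _]
    push_cast
    ring
  have hNN : N * N = -(replicateCol Unit e * replicateRow Unit e + replicateCol Unit u * replicateRow Unit u) := by
    rw [hNdef]
    rw [sub_mul, mul_sub, mul_sub, cr_mul, cr_mul, cr_mul, cr_mul, hue, heu, huu, hee,
      zero_smul, zero_smul, one_smul, one_smul]
    abel
  set p := N.charpoly with hp'
  set q : ℂ[X] := X^(n-2) * ((X - C Complex.I) * (X - C (-Complex.I))) with hq'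
  have hkey : ∀ z : ℂ, z ≠ 0 → eval z (p*p) = eval z (q*q) := by
    intro z hz
    have hzz : (z*z) ≠ 0 := mul_ne_zero hz hz
    have e2 : det (z • (1:Matrix V V ℂ) - N) * det (z • (1:Matrix V V ℂ) - N)
        = det ((z*z) • (1:Matrix V V ℂ) - N*N) := by
      have h3 : det (z • (1:Matrix V V ℂ) - N) = det (z • (1:Matrix V V ℂ) + N) := by
        rw [← Matrix.det_transpose (z • 1 - N), Matrix.transpose_sub, Matrix.transpose_smul,
          Matrix.transpose_one, hNT, sub_neg_eq_add]
      nth_rewrite 2 [h3]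
      rw [← Matrix.det_mul]
      congr 1
      simp only [sub_mul, mul_add, smul_mul_assoc, mul_smul_comm, Matrix.one_mul,
        Matrix.mul_one, smul_add, smul_smul]
      module
    have e4 : (z*z) • (1:Matrix V V ℂ) - N*N
        = (z*z) • (1 + replicateCol Unit ((z*z)⁻¹ • e) * replicateRow Unit e
            + replicateCol Unit ((z*z)⁻¹ • u) * replicateRow Unit u) := by
      rw [hNN, sub_neg_eq_add]
      ext i j
      simp only [Matrix.add_apply, Matrix.smul_apply, cr_apply, Matrix.one_apply,
        Pi.smul_apply, smul_eq_mul]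
      by_cases h : i = j <;> simp only [if_pos, if_neg, h] <;> field_simp <;> ring
    have e5 : det (1 + replicateCol Unit ((z*z)⁻¹ • e) * replicateRow Unit e
        + replicateCol Unit ((z*z)⁻¹ • u) * replicateRow Unit u) = (1 + (z*z)⁻¹) * (1 + (z*z)⁻¹) := by
      have hfac : (1 + replicateCol Unit ((z*z)⁻¹ • e) * replicateRow Unit e
            + replicateCol Unit ((z*z)⁻¹ • u) * replicateRow Unit u)
          = (1 + replicateCol Unit ((z*z)⁻¹ • e) * replicateRow Unit e)
            * (1 + replicateCol Unit ((z*z)⁻¹ • u) * replicateRow Unit u) := by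
        rw [mul_add, add_mul, add_mul, Matrix.mul_one, Matrix.one_mul, cr_mul]
        rw [show e ⬝ᵥ ((z*z)⁻¹ • u) = 0 by rw [dotProduct_smul, heu, smul_zero]]
        rw [zero_smul, add_zero, Matrix.mul_one]
      rw [hfac, Matrix.det_mul, Matrix.det_one_add_replicateCol_mul_replicateRow,
        Matrix.det_one_add_replicateCol_mul_replicateRow, dotProduct_smul, dotProduct_smul, hee, huu]
      simp [smul_eq_mul]
    have e6 : eval z (p*p) = (z*z)^n * ((1 + (z*z)⁻¹) * (1 + (z*z)⁻¹)) := by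
      rw [eval_mul, hp', eval_charpoly', e2, e4, Matrix.det_smul, ← hn', e5]
    have hI : (z - Complex.I) * (z - (-Complex.I)) = z*z + 1 := by
      rw [sub_neg_eq_add]
      linear_combination (-1 : ℂ) * Complex.I_mul_I
    have e7 : eval z (q*q) = (z^(n-2) * (z*z+1)) * (z^(n-2) * (z*z+1)) := by
      rw [hq']
      simp only [eval_mul, eval_pow, eval_sub, eval_X, eval_C, hI]
    rw [e6, e7]
    obtain ⟨k, hk⟩ : ∃ k, n = k + 2 := ⟨n - 2, by omega⟩
    rw [show n - 2 = k by omega, hk]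
    field_simp
    ring
  have hpq2 : p * p = q * q := by
    apply Polynomial.eq_of_infinite_eval_eq
    apply Set.Infinite.mono (s := {(0:ℂ)}ᶜ)
    · intro z hz
      exact hkey z hz
    · exact Set.Finite.infinite_compl (Set.finite_singleton 0)
  have hq_monic : q.Monic :=
    (monic_X_pow _).mul ((monic_X_sub_C _).mul (monic_X_sub_C _))
  have hp_monic : p.Monic := Matrix.charpoly_monic N
  have hpq : p = q := by
    rcases mul_self_eq_mul_self_iff.mp hpq2 with h | h
    · exact h
    · exfalso
      have h2 := congrArg leadingCoeff h
      rw [hp_monic.leadingCoeff, leadingCoeff_neg, hq_monic.leadingCoeff] at h2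
      norm_num at h2
  have hroots : q.roots = Multiset.replicate (n-2) 0 + ({Complex.I} + {-Complex.I}) := by
    have h1 : ((X : ℂ[X])^(n-2)) ≠ 0 := (monic_X_pow _).ne_zero
    have h2 : ((X - C Complex.I) * (X - C (-Complex.I)) : ℂ[X]) ≠ 0 :=
      ((monic_X_sub_C _).mul (monic_X_sub_C _)).ne_zero
    have h3 : ((X - C Complex.I) : ℂ[X]) ≠ 0 := (monic_X_sub_C _).ne_zero
    have h4 : ((X - C (-Complex.I)) : ℂ[X]) ≠ 0 := (monic_X_sub_C _).ne_zero
    rw [hq', Polynomial.roots_mul (mul_ne_zero h1 h2), Polynomial.roots_mul (mul_ne_zero h3 h4),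
      Polynomial.roots_pow, Polynomial.roots_X, Polynomial.roots_X_sub_C,
      Polynomial.roots_X_sub_C, Multiset.nsmul_singleton]
  have hspec : spec (skewRandicMatrix G σ) = q.roots := by
    rw [spec, ← hN', ← hp', hpq]
  rw [energy, hspec, hroots]
  simp only [Multiset.map_add, Multiset.sum_add, Multiset.map_replicate,
    Multiset.sum_replicate, Multiset.map_singleton, Multiset.sum_singleton]
  rw [norm_zero]
  simp [Complex.norm_I]
  norm_num
end

section
/- Let T be a tree (a connected acyclic simple graph) on a finite vertex set V with |V| = n ≥ 2, and let σ be any orientation of T. Then RE_s(T^σ) ≥ 2. -/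
open Matrix Polynomial

section Aux

open Multiset in
lemma aux_esymm_one {R : Type*} [CommRing R] (s : Multiset R) : s.esymm 1 = s.sum := by
  simp [esymm, powersetCard_one, Multiset.map_map]

open Multiset in
lemma aux_esymm_two_cons {R : Type*} [CommRing R] (a : R) (s : Multiset R) :
    (a ::ₘ s).esymm 2 = a * s.sum + s.esymm 2 := by
  have h : (2 : ℕ) = 1 + 1 := rfl
  rw [esymm, h, powersetCard_cons, Multiset.map_add, Multiset.sum_add, Multiset.map_map,
    powersetCard_one, Multiset.map_map]
  rw [add_comm]
  congr 1
  · simpa using Multiset.sum_map_mul_left (f := id) (a := a) (s := s)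

lemma aux_sum_sq_eq_esymm {R : Type*} [CommRing R] (s : Multiset R) :
    s.sum ^ 2 = (s.map (· ^ 2)).sum + 2 * s.esymm 2 := by
  induction s using Multiset.induction_on with
  | empty => simp [Multiset.esymm, Multiset.powersetCard_eq_empty 2 (s := (0 : Multiset R)) (by simp)]
  | cons a s ih =>
    simp only [Multiset.sum_cons, Multiset.map_cons, aux_esymm_two_cons]
    linear_combination ih

lemma aux_abs_esymm_two_le (s : Multiset ℂ) :
    ‖s.esymm 2‖ ≤ (s.map (fun z => ‖z‖)).esymm 2 := by
  rw [Multiset.esymm, Multiset.esymm, Multiset.powersetCard_map, Multiset.map_map]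
  refine le_trans (norm_multiset_sum_le _) ?_
  rw [Multiset.map_map]
  apply Multiset.sum_map_le_sum_map
  intro t ht
  simp only [Function.comp_apply]
  exact le_of_eq (map_multiset_prod (normHom : ℂ →*₀ ℝ) t)

lemma aux_abs_multiset_sum_le (s : Multiset ℂ) :
    ‖s.sum‖ ≤ (s.map (fun z => ‖z‖)).sum := by
  exact norm_multiset_sum_le s

open Equiv in
lemma aux_charpoly_coeff_card_sub_two {V : Type*} [Fintype V] [DecidableEq V]
    (N : Matrix V V ℂ) (hdiag : ∀ i, N i i = 0) (hn : 2 ≤ Fintype.card V) :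
    N.charpoly.coeff (Fintype.card V - 2) =
      -(∑ p ∈ Finset.univ.offDiag, N p.1 p.2 * N p.2 p.1) / 2 := by
  classical
  set n := Fintype.card V with hn'
  have key : ∀ σ : Equiv.Perm V, (∏ i, (charmatrix N) (σ i) i) =
      X ^ (n - σ.support.card) * C (∏ i ∈ σ.support, -(N (σ i) i)) := by
    intro σ
    rw [← Finset.prod_mul_prod_compl σ.support, mul_comm]
    congr 1
    · have : ∀ i ∈ σ.supportᶜ, (charmatrix N) (σ i) i = X := by
        intro i hi
        have : σ i = i := by
          simpa using (Equiv.Perm.notMem_support.mp (Finset.mem_compl.mp hi))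
        rw [this, charmatrix_apply_eq, hdiag, map_zero, sub_zero]
      rw [Finset.prod_congr rfl this, Finset.prod_const, Finset.card_compl]
    · have : ∀ i ∈ σ.support, (charmatrix N) (σ i) i = C (-(N (σ i) i)) := by
        intro i hi
        rw [charmatrix_apply_ne _ _ _ (Equiv.Perm.mem_support.mp hi), map_neg]
      rw [Finset.prod_congr rfl this, ← map_prod]
  have hcard : ∀ σ : Equiv.Perm V, σ.support.card ≤ n := fun σ => by
    simpa using Finset.card_le_card (Finset.subset_univ σ.support)
  have step1 : N.charpoly.coeff (n - 2) =
      ∑ σ ∈ Finset.univ.filter (fun σ : Equiv.Perm V => σ.support.card = 2),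
        (-1 : ℂ) * (∏ i ∈ σ.support, -(N (σ i) i)) := by
    rw [Matrix.charpoly, Matrix.det_apply']
    rw [Polynomial.finset_sum_coeff]
    rw [Finset.sum_filter]
    refine Finset.sum_congr rfl (fun σ _ => ?_)
    have hc := hcard σ
    rw [key σ]
    have heq : (((Equiv.Perm.sign σ : ℤ) : ℂ[X])) * (X ^ (n - σ.support.card) *
        C (∏ i ∈ σ.support, -(N (σ i) i))) =
        C (((Equiv.Perm.sign σ : ℤ) : ℂ) * ∏ i ∈ σ.support, -(N (σ i) i)) *
          X ^ (n - σ.support.card) := by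
      rw [Polynomial.C_mul, Polynomial.C_eq_intCast]
      ring
    rw [heq, Polynomial.coeff_C_mul, Polynomial.coeff_X_pow]
    by_cases h2 : σ.support.card = 2
    · have hm : n - 2 = n - σ.support.card := by omega
      rw [if_pos hm, if_pos h2]
      have hsign : Equiv.Perm.sign σ = -1 :=
        (Equiv.Perm.card_support_eq_two.mp h2).sign_eq
      rw [hsign]
      push_cast
      ring
    · have hm : ¬ (n - 2 = n - σ.support.card) := by omega
      rw [if_neg hm, if_neg h2, mul_zero]
  have hmap : ∀ p ∈ Finset.univ.offDiag,
      Equiv.swap (Prod.fst (α := V) (β := V) p) p.2 ∈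
        Finset.univ.filter (fun σ : Equiv.Perm V => σ.support.card = 2) := by
    intro p hp
    have hne : p.1 ≠ p.2 := (Finset.mem_offDiag.mp hp).2.2
    exact Finset.mem_filter.mpr ⟨Finset.mem_univ _,
      by rw [Equiv.Perm.support_swap hne, Finset.card_pair hne]⟩
  have step2 : (∑ p ∈ Finset.univ.offDiag, N p.1 p.2 * N p.2 p.1) =
      ∑ σ ∈ Finset.univ.filter (fun σ : Equiv.Perm V => σ.support.card = 2),
        2 * (∏ i ∈ σ.support, -(N (σ i) i)) := by
    rw [← Finset.sum_fiberwise_of_maps_to hmap (fun p => N p.1 p.2 * N p.2 p.1)]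
    refine Finset.sum_congr rfl (fun τ hτ => ?_)
    obtain ⟨a, b, hab, rfl⟩ :=
      Equiv.Perm.card_support_eq_two.mp (Finset.mem_filter.mp hτ).2
    have hfib : Finset.univ.offDiag.filter
        (fun p : V × V => Equiv.swap p.1 p.2 = Equiv.swap a b) = {(a, b), (b, a)} := by
      ext ⟨c, d⟩
      simp only [Finset.mem_filter, Finset.mem_offDiag, Finset.mem_univ, true_and,
        Finset.mem_insert, Finset.mem_singleton, Prod.mk.injEq]
      constructor
      · rintro ⟨hcd, hs⟩
        have hd : d = Equiv.swap a b c := by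
          rw [← hs, Equiv.swap_apply_left]
        by_cases hca : c = a
        · subst hca
          rw [Equiv.swap_apply_left] at hd
          exact Or.inl ⟨rfl, hd⟩
        by_cases hcb : c = b
        · subst hcb
          rw [Equiv.swap_apply_right] at hd
          exact Or.inr ⟨rfl, hd⟩
        · rw [Equiv.swap_apply_of_ne_of_ne hca hcb] at hd
          exact absurd hd.symm hcd
      · rintro (⟨rfl, rfl⟩ | ⟨rfl, rfl⟩)
        · exact ⟨hab, rfl⟩
        · exact ⟨hab.symm, Equiv.swap_comm _ _⟩
    rw [hfib, Finset.sum_pair (by simp [hab, Prod.ext_iff])]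
    rw [Equiv.Perm.support_swap hab, Finset.prod_pair hab,
      Equiv.swap_apply_left, Equiv.swap_apply_right]
    ring
  rw [step1, step2, neg_div, Finset.sum_div, ← Finset.sum_neg_distrib]
  exact Finset.sum_congr rfl fun σ _ => by ring

lemma aux_tree_randic_sum_ge {V : Type*} [Fintype V] [DecidableEq V] (T : SimpleGraph V)
    [DecidableRel T.Adj] (hconn : T.Connected) (hacyc : T.IsAcyclic)
    (hn : 2 ≤ Fintype.card V) :
    (2 : ℝ) ≤ ∑ p ∈ Finset.univ.offDiag,
      (if T.Adj p.1 p.2 then 1 / ((T.degree p.1 : ℝ) * (T.degree p.2 : ℝ)) else 0) := by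
  classical
  have hdeg : ∀ v, 0 < T.degree v := by
    intro v
    obtain ⟨w, hw⟩ := Fintype.exists_ne_of_one_lt_card (by omega) v
    obtain ⟨p⟩ := hconn.preconnected v w
    cases p with
    | nil => exact absurd rfl hw
    | cons h _ => exact T.degree_pos_iff_exists_adj v |>.mpr ⟨_, h⟩
  have hdegR : ∀ v, (1 : ℝ) ≤ (T.degree v : ℝ) := by
    intro v; exact_mod_cast hdeg v
  set f : V × V → ℝ :=
    fun p => if T.Adj p.1 p.2 then 1 / ((T.degree p.1 : ℝ) * (T.degree p.2 : ℝ)) else 0 with hf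
  have hext : ∑ p ∈ Finset.univ.offDiag, f p = ∑ p ∈ Finset.univ ×ˢ Finset.univ, f p := by
    refine Finset.sum_subset (fun p hp => Finset.mem_product.mpr ⟨Finset.mem_univ _, Finset.mem_univ _⟩) ?_
    intro p _ hp
    have : p.1 = p.2 := by
      by_contra hne
      exact hp (Finset.mem_offDiag.mpr ⟨Finset.mem_univ _, Finset.mem_univ _, hne⟩)
    simp [hf, this]
  have hterm : ∀ v w, T.Adj v w →
      1 / ((T.degree v : ℝ)) + 1 / (T.degree w : ℝ) - 1 ≤
        1 / ((T.degree v : ℝ) * (T.degree w : ℝ)) := by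
    intro v w _
    have ha := hdegR v
    have hb := hdegR w
    have ha0 : (0:ℝ) < (T.degree v : ℝ) := by linarith
    have hb0 : (0:ℝ) < (T.degree w : ℝ) := by linarith
    rw [div_add_div _ _ (ne_of_gt ha0) (ne_of_gt hb0), div_sub' (by positivity),
      div_le_div_iff₀ (by positivity) (by positivity)]
    nlinarith [mul_nonneg (sub_nonneg.mpr ha) (sub_nonneg.mpr hb), mul_pos ha0 hb0]
  have hlow : ∑ v, ∑ w, (if T.Adj v w then
        (1 / ((T.degree v : ℝ)) + 1 / (T.degree w : ℝ) - 1) else 0) ≤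
      ∑ p ∈ Finset.univ ×ˢ Finset.univ, f p := by
    rw [Finset.sum_product]
    refine Finset.sum_le_sum fun v _ => Finset.sum_le_sum fun w _ => ?_
    by_cases h : T.Adj v w
    · simp only [hf, if_pos h]
      exact hterm v w h
    · simp [hf, h]
  have hA : ∀ (g : V → ℝ) (v : V), ∑ w, (if T.Adj v w then g v else 0) = T.degree v * g v := by
    intro g v
    rw [← Finset.sum_filter, ← SimpleGraph.neighborFinset_eq_filter, Finset.sum_const,
      SimpleGraph.card_neighborFinset_eq_degree, nsmul_eq_mul]
  have hsplit : ∑ v, ∑ w, (if T.Adj v w then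
        (1 / ((T.degree v : ℝ)) + 1 / (T.degree w : ℝ) - 1) else 0) =
      (∑ v, ∑ w, (if T.Adj v w then 1 / (T.degree v : ℝ) else 0)) +
      (∑ v, ∑ w, (if T.Adj v w then 1 / (T.degree w : ℝ) else 0)) -
      (∑ v, ∑ w, (if T.Adj v w then (1:ℝ) else 0)) := by
    simp only [← Finset.sum_add_distrib, ← Finset.sum_sub_distrib]
    refine Finset.sum_congr rfl fun v _ => Finset.sum_congr rfl fun w _ => ?_
    split_ifs <;> simp
  have hEdge : (∑ v, (T.degree v : ℝ)) = 2 * ((Fintype.card V : ℝ) - 1) := by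
    have h1 : ∑ v, T.degree v = 2 * T.edgeFinset.card :=
      T.sum_degrees_eq_twice_card_edges
    have h2 : T.edgeFinset.card + 1 = Fintype.card V :=
      SimpleGraph.IsTree.card_edgeFinset ⟨hconn, hacyc⟩
    have h3 : ∑ v, T.degree v = 2 * (Fintype.card V - 1) := by omega
    have : ((∑ v, T.degree v : ℕ) : ℝ) = ((2 * (Fintype.card V - 1) : ℕ) : ℝ) := by
      rw [h3]
    rw [Nat.cast_sum] at this
    rw [this]
    have : (1:ℕ) ≤ Fintype.card V := by omega
    push_cast [Nat.cast_sub this]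
    ring
  have hAval : (∑ v, ∑ w, (if T.Adj v w then 1 / (T.degree v : ℝ) else 0)) =
      (Fintype.card V : ℝ) := by
    rw [Finset.sum_congr rfl fun v _ => hA (fun v => 1 / (T.degree v : ℝ)) v]
    rw [Finset.sum_congr rfl fun v (_ : v ∈ Finset.univ) =>
      mul_one_div_cancel (ne_of_gt (by exact_mod_cast hdeg v) : (T.degree v : ℝ) ≠ 0)]
    simp
  have hCval : (∑ v, ∑ w, (if T.Adj v w then (1:ℝ) else 0)) =
      2 * ((Fintype.card V : ℝ) - 1) := by
    rw [Finset.sum_congr rfl fun v _ => hA (fun _ => (1:ℝ)) v]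
    simpa using hEdge
  have hBval : (∑ v, ∑ w, (if T.Adj v w then 1 / (T.degree w : ℝ) else 0)) =
      (Fintype.card V : ℝ) := by
    rw [Finset.sum_comm]
    rw [Finset.sum_congr rfl fun w (_ : w ∈ Finset.univ) => Finset.sum_congr rfl
      fun v (_ : v ∈ Finset.univ) => if_congr (T.adj_comm v w) rfl rfl]
    exact hAval
  rw [hext.symm] at hlow
  rw [hsplit, hAval, hBval, hCval] at hlow
  calc (2:ℝ) = (Fintype.card V : ℝ) + (Fintype.card V : ℝ) - 2 * ((Fintype.card V : ℝ) - 1) := by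
        ring
  _ ≤ _ := hlow

end Aux

theorem skewRandic_energy_tree_lower_bound
    {V : Type*} [Fintype V] [DecidableEq V] (T : SimpleGraph V) [DecidableRel T.Adj]
    (hconn : T.Connected) (hacyc : T.IsAcyclic) (hn : 2 ≤ Fintype.card V)
    (σ : V → V → ℝ) (hσ : IsOrientation T σ) :
    2 ≤ energy (skewRandicMatrix T σ) := by
  classical
  haveI : Nonempty V := Fintype.card_pos_iff.mp (by omega)
  set n := Fintype.card V with hn'
  set M : Matrix V V ℝ := skewRandicMatrix T σ with hM
  set Mc : Matrix V V ℂ := M.map (fun x : ℝ => (x : ℂ)) with hMc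
  set p : ℂ[X] := Mc.charpoly with hp
  set r : Multiset ℂ := p.roots with hr
  -- basic entry facts
  have hdiag : ∀ v, M v v = 0 := by
    intro v
    have : σ v v = 0 := hσ.2.2 v v (T.irrefl)
    simp [hM, skewRandicMatrix, this]
  have hdiagc : ∀ v, Mc v v = 0 := by
    intro v; simp [hMc, Matrix.map_apply, hdiag v]
  have hskew : ∀ v w, M w v = -M v w := by
    intro v w
    have h1 : σ w v = -σ v w := by linarith [hσ.1 v w]
    simp only [hM, skewRandicMatrix, h1, neg_div]
    rw [mul_comm ((T.degree w : ℝ)) ((T.degree v : ℝ))]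
  have hM2 : ∀ v w, (M v w) ^ 2 =
      (if T.Adj v w then 1 / ((T.degree v : ℝ) * (T.degree w : ℝ)) else 0) := by
    intro v w
    by_cases h : T.Adj v w
    · rw [if_pos h]
      have hnn : (0:ℝ) ≤ (T.degree v : ℝ) * (T.degree w : ℝ) := by positivity
      have hsq : (σ v w) ^ 2 = 1 := by
        rcases hσ.2.1 v w h with h1 | h1 <;> rw [h1] <;> norm_num
      simp only [hM, skewRandicMatrix, div_pow, hsq, Real.sq_sqrt hnn]
    · rw [if_neg h]
      simp [hM, skewRandicMatrix, hσ.2.2 v w h]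
  -- the key coefficient computation
  set Q : ℝ := ∑ q ∈ Finset.univ.offDiag, (M q.1 q.2) ^ 2 with hQ
  have hQ2 : (2:ℝ) ≤ Q := by
    rw [hQ, Finset.sum_congr rfl fun q _ => hM2 q.1 q.2]
    exact aux_tree_randic_sum_ge T hconn hacyc hn
  have hcoeff : p.coeff (n - 2) = ((Q / 2 : ℝ) : ℂ) := by
    rw [hp, aux_charpoly_coeff_card_sub_two Mc hdiagc hn]
    have : ∀ q ∈ Finset.univ.offDiag,
        Mc q.1 q.2 * Mc q.2 q.1 = ((-(M q.1 q.2)^2 : ℝ) : ℂ) := by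
      intro q _
      simp only [hMc, Matrix.map_apply]
      rw [hskew q.1 q.2]
      push_cast
      ring
    rw [Finset.sum_congr rfl this, ← Complex.ofReal_sum]
    have hsn : (∑ q ∈ Finset.univ.offDiag, -(M q.1 q.2 ^ 2)) = -Q := by
      rw [hQ, ← Finset.sum_neg_distrib]
    rw [hsn]
    push_cast
    ring
  -- polynomial facts
  have hmonic : p.Monic := Mc.charpoly_monic
  have hdeg : p.natDegree = n := Mc.charpoly_natDegree_eq_dim
  have hsplits : p.Splits := IsAlgClosed.splits p
  have hcardr : Multiset.card r = p.natDegree := (Polynomial.splits_iff_card_roots).mp hsplits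
  -- trace is zero, hence sum of roots is zero
  have htrace : Mc.trace = 0 := by
    simp only [Matrix.trace, Matrix.diag]
    exact Finset.sum_eq_zero fun v _ => hdiagc v
  have hsum : r.sum = 0 := by
    have h1 := Mc.trace_eq_neg_charpoly_coeff
    rw [htrace] at h1
    have h2 : p.coeff (n - 1) = p.leadingCoeff * (-1) ^ (p.natDegree - (n-1)) *
        r.esymm (p.natDegree - (n-1)) :=
      Polynomial.coeff_eq_esymm_roots_of_card hcardr (by omega)
    have h3 : p.natDegree - (n - 1) = 1 := by omega
    rw [h3, hmonic.leadingCoeff, aux_esymm_one] at h2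
    have : p.coeff (n - 1) = 0 := by
      have := h1.symm
      simpa [hp] using this
    rw [this] at h2
    have := h2.symm
    simpa using this
  -- esymm 2 of roots equals Q/2
  have hesymm : r.esymm 2 = ((Q / 2 : ℝ) : ℂ) := by
    have h2 : p.coeff (n - 2) = p.leadingCoeff * (-1) ^ (p.natDegree - (n-2)) *
        r.esymm (p.natDegree - (n-2)) :=
      Polynomial.coeff_eq_esymm_roots_of_card hcardr (by omega)
    have h3 : p.natDegree - (n - 2) = 2 := by omega
    rw [h3, hmonic.leadingCoeff] at h2
    rw [hcoeff] at h2
    have := h2.symm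
    simpa using this
  -- power sum of roots
  have hpowsum : (r.map (· ^ 2)).sum = -((Q : ℂ)) := by
    have := aux_sum_sq_eq_esymm r
    rw [hsum, hesymm] at this
    have h0 : (0:ℂ)^2 = 0 := by norm_num
    rw [h0] at this
    have : (r.map (· ^ 2)).sum = -(2 * ((Q / 2 : ℝ) : ℂ)) := by linear_combination -this
    rw [this]
    push_cast
    ring
  -- energy estimates
  set ar : Multiset ℝ := r.map (fun z => ‖z‖) with har
  have henergy : energy M = ar.sum := rfl
  have hsq : ar.sum ^ 2 = (ar.map (· ^ 2)).sum + 2 * ar.esymm 2 := aux_sum_sq_eq_esymm ar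
  have hb1 : Q ≤ (ar.map (· ^ 2)).sum := by
    have heq : ar.map (· ^ 2) = (r.map (· ^ 2)).map (fun z => ‖z‖) := by
      rw [har, Multiset.map_map, Multiset.map_map]
      exact Multiset.map_congr rfl fun z _ => by
        simp [Function.comp, norm_pow]
    have := aux_abs_multiset_sum_le (r.map (· ^ 2))
    rw [hpowsum, ← heq] at this
    have habs : ‖(-((Q:ℝ):ℂ))‖ = Q := by
      rw [norm_neg, Complex.norm_real, Real.norm_of_nonneg (by linarith)]
    rw [habs] at this
    exact this
  have hb2 : Q / 2 ≤ ar.esymm 2 := by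
    have := aux_abs_esymm_two_le r
    rw [hesymm] at this
    have habs : ‖((Q/2 : ℝ) : ℂ)‖ = Q / 2 := by
      rw [Complex.norm_real, Real.norm_of_nonneg (by linarith)]
    rw [habs, ← har] at this
    exact this
  have hnonneg : 0 ≤ ar.sum := by
    apply Multiset.sum_nonneg
    intro x hx
    obtain ⟨z, _, rfl⟩ := Multiset.mem_map.mp hx
    exact norm_nonneg z
  have hfour : 4 ≤ ar.sum ^ 2 := by
    rw [hsq]
    nlinarith
  rw [henergy]
  nlinarith
end

section
/- Let G be a simple graph on a finite vertex set V, let σ be an orientation of G, and let ε : V → ℝ be a function with ε(v) ∈ {1, −1} for all v. Define τ by τ v w = ε(v)·σ v w·ε(w) (so G^τ is obtained from G^σ by a switching with respect to the set W = {v : ε(v) = −1}). Then τ is an orientation of G and the skew Randić spectrum of G^τ equals the skew Randić spectrum of G^σ (as multisets). -/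
open Matrix Polynomial

lemma charpoly_conj_self {n R : Type*} [Fintype n] [DecidableEq n] [CommRing R]
    (D M : Matrix n n R) (hD : D * D = 1) : (D * M * D).charpoly = M.charpoly := by
  have hD' : (C : R →+* R[X]).mapMatrix D * (C : R →+* R[X]).mapMatrix D = 1 := by
    rw [← _root_.map_mul, hD, _root_.map_one]
  have key : charmatrix (D * M * D)
      = (C : R →+* R[X]).mapMatrix D * charmatrix M * (C : R →+* R[X]).mapMatrix D := by
    unfold charmatrix
    rw [mul_sub, sub_mul, _root_.map_mul, _root_.map_mul]
    congr 1
    rw [mul_assoc, scalar_commute (X : R[X]) (Commute.all _) _, ← mul_assoc, hD', one_mul]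
  rw [Matrix.charpoly, Matrix.charpoly, key, det_mul, det_mul]
  rw [mul_comm, ← mul_assoc, ← det_mul, hD', det_one, one_mul]

theorem skewRandic_spectrum_switching_invariant
    {V : Type*} [Fintype V] [DecidableEq V] (G : SimpleGraph V) [DecidableRel G.Adj]
    (σ : V → V → ℝ) (hσ : IsOrientation G σ)
    (ε : V → ℝ) (hε : ∀ v, ε v = 1 ∨ ε v = -1) :
    IsOrientation G (fun v w => ε v * σ v w * ε w) ∧
    spec (skewRandicMatrix G (fun v w => ε v * σ v w * ε w))
      = spec (skewRandicMatrix G σ) := by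
  obtain ⟨h1, h2, h3⟩ := hσ
  have hε2 : ∀ v, ε v * ε v = 1 := by
    intro v; rcases hε v with h | h <;> rw [h] <;> norm_num
  constructor
  · refine ⟨fun v w => ?_, fun v w hvw => ?_, fun v w hvw => ?_⟩
    · simp only []; linear_combination ε v * ε w * h1 v w
    · rcases hε v with hv | hv <;> rcases hε w with hw | hw <;>
        rcases h2 v w hvw with h | h <;> simp [hv, hw, h]
    · simp [h3 v w hvw]
  · set D : Matrix V V ℝ := Matrix.diagonal ε with hDdef
    have hDD : D * D = 1 := by
      rw [hDdef, diagonal_mul_diagonal]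
      ext v w
      by_cases h : v = w <;> simp [Matrix.diagonal, h, hε2, Matrix.one_apply]
    have hM : skewRandicMatrix G (fun v w => ε v * σ v w * ε w)
        = D * skewRandicMatrix G σ * D := by
      ext v w
      simp [skewRandicMatrix, hDdef, Matrix.mul_apply, Matrix.diagonal,
        Finset.sum_ite_eq, Finset.sum_ite_eq']
      ring
    rw [hM]
    unfold spec
    have hcoe : ∀ (M : Matrix V V ℝ), (M.map fun x : ℝ => (x : ℂ)) = M.map Complex.ofRealHom :=
      fun M => rfl
    rw [hcoe, hcoe, Matrix.charpoly_map, Matrix.charpoly_map,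
      charpoly_conj_self D (skewRandicMatrix G σ) hDD]
end

section
/- Let T be a tree (a connected acyclic simple graph) on a finite nonempty vertex set V. Then for any two orientations σ and τ of T, the skew Randić energies coincide: RE_s(T^σ) = RE_s(T^τ). -/
open Matrix Polynomial

/-! ### Auxiliary lemmas -/

/-- Conjugating by a diagonal involution preserves the characteristic polynomial. -/
lemma charpoly_diagonal_conj {n R : Type*} [Fintype n] [DecidableEq n] [CommRing R]
    (M : Matrix n n R) (d : n → R) (hd : ∀ i, d i * d i = 1) :
    (Matrix.diagonal d * M * Matrix.diagonal d).charpoly = M.charpoly := by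
  have hmap : (Matrix.diagonal d).map (C : R →+* R[X]) = Matrix.diagonal (fun i => C (d i)) := by
    rw [Matrix.diagonal_map (by simp)]
  have hchar : charmatrix (Matrix.diagonal d * M * Matrix.diagonal d)
      = Matrix.diagonal (fun i => C (d i)) * charmatrix M * Matrix.diagonal (fun i => C (d i)) := by
    rw [charmatrix, charmatrix]
    rw [Matrix.mul_sub, Matrix.sub_mul]
    congr 1
    · rw [Matrix.scalar_apply, Matrix.diagonal_mul_diagonal, Matrix.diagonal_mul_diagonal]
      have key : (fun i => C (d i) * X * C (d i)) = fun _ => (X : R[X]) := by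
        funext i
        have : C (d i) * X * C (d i) = C (d i * d i) * X := by rw [C_mul]; ring
        rw [this, hd i]; simp
      rw [key]
    · simp only [RingHom.mapMatrix_apply]
      rw [Matrix.map_mul, Matrix.map_mul, hmap]
  rw [Matrix.charpoly, Matrix.charpoly, hchar, Matrix.det_mul, Matrix.det_mul]
  have h1 : (Matrix.diagonal fun i => C (d i)).det * (Matrix.diagonal fun i => C (d i)).det = 1 := by
    rw [Matrix.det_diagonal, ← Finset.prod_mul_distrib]
    apply Finset.prod_eq_one; intro i _; rw [← C_mul, hd i]; simp
  calc (Matrix.diagonal fun i => C (d i)).det * M.charmatrix.det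
        * (Matrix.diagonal fun i => C (d i)).det
      = M.charmatrix.det * ((Matrix.diagonal fun i => C (d i)).det
        * (Matrix.diagonal fun i => C (d i)).det) := by ring
    _ = M.charmatrix.det := by rw [h1, mul_one]

/-- The product of an edge-sign function along the darts of a walk. -/
noncomputable def wprod {V : Type*} {G : SimpleGraph V} (s : V → V → ℝ) {u v : V}
    (p : G.Walk u v) : ℝ :=
  (p.darts.map fun d => s d.toProd.1 d.toProd.2).prod

lemma wprod_concat {V : Type*} {G : SimpleGraph V} (s : V → V → ℝ) {u v w : V}
    (p : G.Walk u v) (h : G.Adj v w) :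
    wprod s (p.concat h) = wprod s p * s v w := by
  simp [wprod, SimpleGraph.Walk.darts_concat]

lemma wprod_sq {V : Type*} {G : SimpleGraph V} (s : V → V → ℝ)
    (hs : ∀ v w, G.Adj v w → s v w = 1 ∨ s v w = -1) {u v : V} (p : G.Walk u v) :
    wprod s p * wprod s p = 1 := by
  induction p with
  | nil => simp [wprod]
  | cons h p ih =>
    simp only [wprod, SimpleGraph.Walk.darts_cons, List.map_cons, List.prod_cons]
    rcases hs _ _ h with h1 | h1 <;>
      · rw [h1]; unfold wprod at ih; nlinarith [ih]

/-- On a tree, any symmetric `±1` edge-labelling is a "coboundary": it can be written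
as `ε v * ε w` for a vertex sign function `ε`. -/
lemma exists_sign {V : Type*} [DecidableEq V] (T : SimpleGraph V) (hT : T.IsTree)
    (s : V → V → ℝ)
    (hs : ∀ v w, T.Adj v w → s v w = 1 ∨ s v w = -1)
    (hsym : ∀ v w, T.Adj v w → s v w = s w v) :
    ∃ ε : V → ℝ, (∀ v, ε v * ε v = 1) ∧ ∀ v w, T.Adj v w → s v w = ε v * ε w := by
  have hne : Nonempty V := hT.isConnected.nonempty
  obtain ⟨r⟩ := hne
  have hup := hT.existsUnique_path
  let P : ∀ v, T.Walk r v := fun v => (hup r v).choose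
  have hP : ∀ v, (P v).IsPath := fun v => (hup r v).choose_spec.1
  have hPu : ∀ v (q : T.Walk r v), q.IsPath → q = P v := fun v q hq =>
    ((hup r v).unique hq (hP v))
  have hlen : ∀ (v w : V), w ∈ (P v).support → w ≠ v → (P w).length < (P v).length := by
    intro v w hw hne
    have hq : ((P v).takeUntil w hw).IsPath := (hP v).takeUntil hw
    have := hPu w _ hq
    rw [← this]
    have hle := SimpleGraph.Walk.length_takeUntil_le (P v) hw
    rcases lt_or_eq_of_le hle with h | h
    · exact h
    · exfalso
      have hspec := SimpleGraph.Walk.take_spec (P v) hw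
      have hlen2 : ((P v).takeUntil w hw).length + ((P v).dropUntil w hw).length
          = (P v).length := by rw [← SimpleGraph.Walk.length_append, hspec]
      have h0 : ((P v).dropUntil w hw).length = 0 := by omega
      exact hne (SimpleGraph.Walk.eq_of_length_eq_zero h0)
  have key : ∀ v w (h : T.Adj v w), w ∉ (P v).support →
      wprod s (P w) = wprod s (P v) * s v w := by
    intro v w h hw
    have hq : ((P v).concat h).IsPath := by
      rw [SimpleGraph.Walk.isPath_def, SimpleGraph.Walk.support_concat,
        List.nodup_append']
      refine ⟨(hP v).support_nodup, List.nodup_singleton w, ?_⟩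
      intro x hx hx'
      simp only [List.mem_singleton] at hx'
      subst hx'
      exact hw hx
    have := hPu w _ hq
    rw [← this, wprod_concat]
  refine ⟨fun v => wprod s (P v), fun v => wprod_sq s hs (P v), ?_⟩
  intro v w h
  by_cases hw : w ∈ (P v).support
  · have hvw : v ∉ (P w).support := by
      intro hv
      have h1 := hlen v w hw h.ne'
      have h2 := hlen w v hv h.ne
      omega
    have hkey := key w v h.symm hvw
    have hsq := wprod_sq s hs (P w)
    show s v w = wprod s (P v) * wprod s (P w)
    rw [hkey, hsym _ _ h]
    linear_combination (-(s w v)) * hsq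
  · have hkey := key v w h hw
    have hsq := wprod_sq s hs (P v)
    show s v w = wprod s (P v) * wprod s (P w)
    rw [hkey]
    linear_combination (-(s v w)) * hsq

theorem skewRandic_energy_tree_orientation_independent
    {V : Type*} [Fintype V] [DecidableEq V] [Nonempty V]
    (T : SimpleGraph V) [DecidableRel T.Adj]
    (hconn : T.Connected) (hacyc : T.IsAcyclic)
    (σ τ : V → V → ℝ) (hσ : IsOrientation T σ) (hτ : IsOrientation T τ) :
    energy (skewRandicMatrix T σ) = energy (skewRandicMatrix T τ) := by
  obtain ⟨hσ1, hσ2, hσ3⟩ := hσ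
  obtain ⟨hτ1, hτ2, hτ3⟩ := hτ
  have hs : ∀ v w, T.Adj v w → σ v w * τ v w = 1 ∨ σ v w * τ v w = -1 := by
    intro v w h
    rcases hσ2 v w h with h1 | h1 <;> rcases hτ2 v w h with h2 | h2 <;>
      rw [h1, h2] <;> norm_num
  have hsym : ∀ v w, T.Adj v w → σ v w * τ v w = σ w v * τ w v := by
    intro v w _
    have e1 : σ w v = -σ v w := by linarith [hσ1 v w]
    have e2 : τ w v = -τ v w := by linarith [hτ1 v w]
    rw [e1, e2]; ring
  obtain ⟨ε, hε1, hε2⟩ := exists_sign T ⟨hconn, hacyc⟩ (fun v w => σ v w * τ v w) hs hsym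
  have hM : skewRandicMatrix T σ
      = Matrix.diagonal ε * skewRandicMatrix T τ * Matrix.diagonal ε := by
    ext v w
    rw [Matrix.mul_diagonal, Matrix.diagonal_mul]
    show σ v w / Real.sqrt _ = ε v * (τ v w / Real.sqrt _) * ε w
    by_cases h : T.Adj v w
    · have h3 := hε2 v w h
      have hτsq : τ v w * τ v w = 1 := by
        rcases hτ2 v w h with h1 | h1 <;> rw [h1] <;> norm_num
      have hστ : σ v w = ε v * τ v w * ε w := by
        linear_combination (τ v w) * h3 - (σ v w) * hτsq
      rw [hστ]; ring
    · rw [hσ3 v w h, hτ3 v w h]; simp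
  have hchar : (skewRandicMatrix T σ).charpoly = (skewRandicMatrix T τ).charpoly := by
    rw [hM]; exact charpoly_diagonal_conj _ _ hε1
  have hspec : spec (skewRandicMatrix T σ) = spec (skewRandicMatrix T τ) := by
    unfold spec
    have hcast : ∀ (M : Matrix V V ℝ), M.map (fun x : ℝ => (x : ℂ))
        = M.map (Complex.ofRealHom : ℝ →+* ℂ) := fun _ => rfl
    rw [hcast, hcast, Matrix.charpoly_map, Matrix.charpoly_map, hchar]
  unfold energy
  rw [hspec]
end
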